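/- arXiv:2108.02459 — 3 statements merged into one kernel-verified Lean document; each statement's English description precedes it below -/
import Mathlib

section
/- Let n ≥ 1 and d ≥ 1 be integers. There exist constants D_2, …, D_{d+1} > 0, each D_k depending only on k, with the following property: let z_1, …, z_{d+1} ∈ B̂^n be distinct points and z_0 ∈ S^{n-1}, and assume there is a straight line ℓ through z_0 such that (1) the distance of each z_i to ℓ is at most ρ > 0, and (2) the pairwise distances between the orthogonal projections of the z_i onto ℓ are at least κ > 0, where 1/10 > κ ≥ 10ρ. Then there exists a C^{d+1} curve ω : [-1,1] → B^n passing through the points z_0, z_1, …, z_{d+1} and satisfying M_1(ω) ≤ 1 and M_k(ω) ≤ D_k · ρ/κ^k for k = 2, 3, …, d+1. -/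
open scoped RealInnerProductSpace
noncomputable section

/-- Euclidean space ℝ^n. -/
abbrev En (n : ℕ) := EuclideanSpace ℝ (Fin n)

/-- Maximum of absolute values of all partial derivatives of order `l` of `f` at `z`. -/
def partialMax (n l : ℕ) (f : En n → ℝ) (z : En n) : ℝ :=
  ⨆ α : Fin l → Fin n,
    |iteratedFDeriv ℝ l f z (fun j => EuclideanSpace.single (α j) (1 : ℝ))|

/-- `M_l(f)`: sup over the closed unit ball of the max partial derivative of order `l`. -/
def Ml (n l : ℕ) (f : En n → ℝ) : ℝ :=
  ⨆ z : Metric.closedBall (0 : En n) 1, partialMax n l f (z : En n)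

/-- The class `U_d(Z)` of normalized `C^{d+1}` functions vanishing on `Z`. -/
def Ud (n d : ℕ) (Z : Set (En n)) : Set (En n → ℝ) :=
  {f | ContDiff ℝ (d + 1 : ℕ) f ∧ (∀ z ∈ Z, f z = 0) ∧ Ml n 0 f = 1}

/-- The `d`-rigidity `RG_d(Z)`. -/
def RG (n d : ℕ) (Z : Set (En n)) : ℝ :=
  sInf (Ml n (d + 1) '' Ud n d Z)

/-- `‖d^k ω(t)‖`: max over coordinates of the `k`-th derivative of the curve `ω` at `t`. -/
def curveDer (n k : ℕ) (ω : ℝ → En n) (t : ℝ) : ℝ :=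
  ⨆ i : Fin n, |iteratedDeriv k ω t i|

/-- `ν_d(ω,t)`: max over `2 ≤ k ≤ d+1` of `‖d^k ω(t)‖`. -/
def nuAt (n d : ℕ) (ω : ℝ → En n) (t : ℝ) : ℝ :=
  ⨆ k : {k : ℕ // 2 ≤ k ∧ k ≤ d + 1}, curveDer n (k : ℕ) ω t

/-- `ν_d(ω)`: max over `t ∈ [-1,1]` of `ν_d(ω,t)`. -/
def nuCurve (n d : ℕ) (ω : ℝ → En n) : ℝ :=
  ⨆ t : Set.Icc (-1 : ℝ) 1, nuAt n d ω (t : ℝ)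

/-- `M_k(ω)`: max over `t ∈ [-1,1]` of `‖d^k ω(t)‖`. -/
def Mkc (n k : ℕ) (ω : ℝ → En n) : ℝ :=
  ⨆ t : Set.Icc (-1 : ℝ) 1, curveDer n k ω (t : ℝ)

/-- Membership in the family `Ω_d(Z,z₀)` of admissible curves. -/
def InOmega (n d : ℕ) (Z : Set (En n)) (z₀ : En n) (ω : ℝ → En n) : Prop :=
  ContDiff ℝ (d + 1 : ℕ) ω ∧
  (∀ t ∈ Set.Icc (-1 : ℝ) 1, ω t ∈ Metric.closedBall (0 : En n) 1) ∧
  (∃ t ∈ Set.Icc (-1 : ℝ) 1, ω t = z₀) ∧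
  (∃ z : Fin (d + 1) → En n, Function.Injective z ∧
    ∀ j, z j ∈ Z ∧ ∃ t ∈ Set.Icc (-1 : ℝ) 1, ω t = z j) ∧
  (∀ t ∈ Set.Icc (-1 : ℝ) 1, 0 < curveDer n 1 ω t ∧ curveDer n 1 ω t ≤ 1) ∧
  nuCurve n d ω ≤ 1

/-- Pointwise `d`-thickness `ν_d(Z,z₀)`. -/
def nuZpt (n d : ℕ) (Z : Set (En n)) (z₀ : En n) : ℝ :=
  sInf (nuCurve n d '' {ω | InOmega n d Z z₀ ω})

/-- `d`-thickness `ν_d(Z)`. -/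
def nuZ (n d : ℕ) (Z : Set (En n)) : ℝ :=
  ⨆ z₀ : Metric.sphere (0 : En n) 1, nuZpt n d Z (z₀ : En n)

/-- Sup of `|P|` over a set `S`. -/
def polySup (n : ℕ) (P : MvPolynomial (Fin n) ℝ) (S : Set (En n)) : ℝ :=
  ⨆ x : S, |MvPolynomial.eval (fun i => (x : En n) i) P|

/-- The Remez constant `R_d(Z)` (value in `[1,∞]`). -/
def Remez (n d : ℕ) (Z : Set (En n)) : ENNReal :=
  sInf {K : ENNReal | 1 ≤ K ∧ ∀ P : MvPolynomial (Fin n) ℝ, P.totalDegree ≤ d →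
    ENNReal.ofReal (polySup n P (Metric.closedBall (0 : En n) 1)) ≤
      K * ENNReal.ofReal (polySup n P Z)}

/-- The inverse Remez constant `R̂_d(Z) = 1/R_d(Z)` (zero when `R_d(Z) = ∞`). -/
def invRemez (n d : ℕ) (Z : Set (En n)) : ℝ :=
  ((Remez n d Z)⁻¹).toReal

/-- The closed axis-parallel grid `ε`-cube with index `α`. -/
def gridCube (n : ℕ) (ε : ℝ) (α : Fin n → ℤ) : Set (En n) :=
  {x | ∀ i, (α i : ℝ) * ε ≤ x i ∧ x i ≤ ((α i : ℝ) + 1) * ε}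

/-- The covering number `M(ε,Z)`: the number of grid `ε`-cubes meeting `Z`. -/
def covNum (n : ℕ) (ε : ℝ) (Z : Set (En n)) : ℕ :=
  Set.ncard {α : Fin n → ℤ | (gridCube n ε α ∩ Z).Nonempty}

/-- Box (entropy) dimension of `Z`. -/
def dimE (n : ℕ) (Z : Set (En n)) : ℝ :=
  Filter.limsup (fun ε : ℝ => Real.log (covNum n ε Z) / Real.log (1 / ε))
    (nhdsWithin 0 (Set.Ioi 0))

/-- The straight line through `z₀` with direction `v`. -/
def lineThrough (n : ℕ) (z₀ v : En n) : Set (En n) :=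
  {x | ∃ t : ℝ, x = z₀ + t • v}

/-- Orthogonal projection of `p` onto the line through `z₀` with unit direction `v`. -/
def projLine (n : ℕ) (z₀ v p : En n) : En n :=
  z₀ + (inner ℝ (p - z₀) v : ℝ) • v

/-- Distance from `p` to the line through `z₀` with unit direction `v`. -/
def distLine (n : ℕ) (z₀ v p : En n) : ℝ :=
  dist p (projLine n z₀ v p)

/-- `ρ(ℓ,𝒵)`: max distance of the `d+1` points to the line. -/
def rhoLine (n d : ℕ) (z₀ v : En n) (z : Fin (d + 1) → En n) : ℝ :=
  ⨆ i, distLine n z₀ v (z i)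

/-- `κ(ℓ,𝒵)`: min distance between projections of the `d+1` points onto the line. -/
def kappaLine (n d : ℕ) (z₀ v : En n) (z : Fin (d + 1) → En n) : ℝ :=
  ⨅ p : {q : Fin (d + 1) × Fin (d + 1) // q.1 ≠ q.2},
    dist (projLine n z₀ v (z (p : Fin (d + 1) × Fin (d + 1)).1))
      (projLine n z₀ v (z (p : Fin (d + 1) × Fin (d + 1)).2))

/-- Pointwise approximate `ad`-thickness `ν̄_d(Z,z₀)`. -/
def barNuZpt (n d : ℕ) (Z : Set (En n)) (z₀ : En n) : ℝ :=
  sInf {m : ℝ | ∃ v : En n, ‖v‖ = 1 ∧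
    (lineThrough n z₀ v ∩ Metric.closedBall (0 : En n) (1 / 3)).Nonempty ∧
    ∃ z : Fin (d + 1) → En n, Function.Injective z ∧ (∀ i, z i ∈ Z) ∧
      m = rhoLine n d z₀ v z / (kappaLine n d z₀ v z) ^ d}

/-- Approximate `ad`-thickness `ν̄_d(Z)`. -/
def barNuZ (n d : ℕ) (Z : Set (En n)) : ℝ :=
  ⨆ z₀ : Metric.sphere (0 : En n) 1, barNuZpt n d Z (z₀ : En n)

/-- The axis-parallel cube with corner `a` and side `s`. -/
def cube (n : ℕ) (a : En n) (s : ℝ) : Set (En n) :=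
  {x | ∀ i, a i ≤ x i ∧ x i ≤ a i + s}

/-- `Z` is `h`-dense in the cube with corner `a` and side `s`. -/
def hDense (n : ℕ) (a : En n) (s h : ℝ) (Z : Set (En n)) : Prop :=
  ∀ b : En n, (∀ i, a i ≤ b i ∧ b i + h ≤ a i + s) → (Z ∩ cube n b h).Nonempty

/-- `μ_d(f,z)`: max over `1 ≤ k ≤ d` of the order-`k` partial derivatives of `f` at `z`. -/
def muF (n d : ℕ) (f : En n → ℝ) (z : En n) : ℝ :=
  ⨆ k : {k : ℕ // 1 ≤ k ∧ k ≤ d}, partialMax n (k : ℕ) f z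

/-- `μ_d(f)`: max over the unit ball of `μ_d(f,z)`. -/
def muFglob (n d : ℕ) (f : En n → ℝ) : ℝ :=
  ⨆ z : Metric.closedBall (0 : En n) 1, muF n d f (z : En n)

/-- `M_m(g)` for a function of one variable on `[-1,1]`. -/
def MIcc (m : ℕ) (g : ℝ → ℝ) : ℝ :=
  ⨆ t : Set.Icc (-1 : ℝ) 1, |iteratedDeriv m g (t : ℝ)|

end

noncomputable section

/-- Smooth bump: 1 at 0, vanishing outside (-1/2, 1/2). -/
def psiB : ℝ → ℝ := fun x => expNegInvGlue (4⁻¹ - x ^ 2) / expNegInvGlue 4⁻¹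

lemma expNegInvGlue_pos_quarter : 0 < expNegInvGlue 4⁻¹ :=
  expNegInvGlue.pos_of_pos (by norm_num)

lemma psiB_contDiff {n : ℕ∞} : ContDiff ℝ n psiB := by
  unfold psiB
  exact (expNegInvGlue.contDiff.comp ((contDiff_const.sub (contDiff_id.pow 2)))).div_const _

lemma psiB_nonneg (x : ℝ) : 0 ≤ psiB x :=
  div_nonneg (expNegInvGlue.nonneg _) (expNegInvGlue.nonneg _)

lemma expNegInvGlue_eq {y : ℝ} (hy : 0 < y) : expNegInvGlue y = Real.exp (-y⁻¹) := by
  simp [expNegInvGlue, hy.not_ge]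

lemma psiB_le_one (x : ℝ) : psiB x ≤ 1 := by
  rw [psiB, div_le_one expNegInvGlue_pos_quarter]
  rcases le_or_gt (4⁻¹ - x ^ 2) 0 with h | h
  · rw [expNegInvGlue.zero_of_nonpos h]; exact (expNegInvGlue_pos_quarter).le
  · rw [expNegInvGlue_eq h, expNegInvGlue_eq (by norm_num)]
    apply Real.exp_le_exp.2
    have h2 : (4:ℝ) ≤ (4⁻¹ - x ^ 2)⁻¹ := by
      rw [le_inv_comm₀ (by norm_num) h]
      nlinarith [sq_nonneg x]
    linarith

lemma psiB_zero_val : psiB 0 = 1 := by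
  rw [psiB]
  norm_num [div_self expNegInvGlue_pos_quarter.ne']

lemma psiB_zero {x : ℝ} (hx : 1/2 ≤ |x|) : psiB x = 0 := by
  have : (4⁻¹ - x ^ 2) ≤ 0 := by
    nlinarith [sq_abs x, abs_nonneg x]
  rw [psiB, expNegInvGlue.zero_of_nonpos this, zero_div]

end

noncomputable section

lemma expNegInvGlue_quarter : expNegInvGlue 4⁻¹ = Real.exp (-4) := by
  rw [expNegInvGlue_eq (by norm_num)]; norm_num

lemma g_hasDerivAt (y : ℝ) :
    HasDerivAt expNegInvGlue ((y⁻¹) ^ 2 * expNegInvGlue y) y := by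
  have h := expNegInvGlue.hasDerivAt_polynomial_eval_inv_mul 1 y
  simpa using h

lemma psiB_hasDerivAt (x : ℝ) :
    HasDerivAt psiB
      (((4⁻¹ - x ^ 2)⁻¹ ^ 2 * expNegInvGlue (4⁻¹ - x ^ 2) * (-(2 * x))) / expNegInvGlue 4⁻¹)
      x := by
  have hq : HasDerivAt (fun x : ℝ => 4⁻¹ - x ^ 2) (-(2 * x)) x := by
    simpa using (hasDerivAt_pow 2 x).const_sub 4⁻¹
  exact ((g_hasDerivAt (4⁻¹ - x ^ 2)).comp x hq).div_const _

lemma abs_deriv_psiB_le (x : ℝ) : |deriv psiB x| ≤ 6 := by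
  rw [(psiB_hasDerivAt x).deriv]
  set y : ℝ := 4⁻¹ - x ^ 2 with hy
  rcases le_or_gt y 0 with h | h
  · rw [expNegInvGlue.zero_of_nonpos h]
    simp
  · -- 0 < y ≤ 1/4
    have hy4 : y ≤ 4⁻¹ := by nlinarith [sq_nonneg x]
    have h12 : (0:ℝ) < 1 - 2 * y := by rw [hy]; nlinarith [sq_nonneg x]
    rw [expNegInvGlue_eq h, expNegInvGlue_quarter]
    set X := |x| with hX
    have hXnn : 0 ≤ X := abs_nonneg x
    have hx2 : x ^ 2 = X ^ 2 := (sq_abs x).symm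
    have h8 : 8 * X ≤ 6 * (1 - 2 * y) ^ 2 := by
      have : 1 - 2 * y = 1/2 + 2 * X ^ 2 := by rw [hy, hx2]; ring
      rw [this]
      nlinarith [sq_nonneg (2 * X - 2/3), sq_nonneg (X ^ 2)]
    -- key exponential inequality
    have h1 : (0:ℝ) < (1 - 2 * y) / (2 * y) := by positivity
    have h2 : (1 - 2 * y) / (2 * y) ≤ Real.exp ((y⁻¹ - 4) / 2) := by
      have ha := Real.add_one_le_exp ((y⁻¹ - 4) / 2)
      have hb : (1 - 2 * y) / (2 * y) = (y⁻¹ - 4) / 2 + 1 := by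
        field_simp
        ring
      linarith
    have h3 : ((1 - 2 * y) / (2 * y)) ^ 2 ≤ Real.exp (y⁻¹ - 4) := by
      have he : Real.exp (y⁻¹ - 4) = (Real.exp ((y⁻¹ - 4) / 2)) ^ 2 := by
        rw [← Real.exp_nat_mul]
        norm_num
        ring
      rw [he]
      exact pow_le_pow_left₀ h1.le h2 2
    have hEineq : Real.exp (-y⁻¹) * (1 - 2 * y) ^ 2 ≤ Real.exp (-(4:ℝ)) * (2 * y) ^ 2 := by
      calc Real.exp (-y⁻¹) * (1 - 2 * y) ^ 2
          = ((1 - 2 * y) / (2 * y)) ^ 2 * (Real.exp (-y⁻¹) * (2 * y) ^ 2) := by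
            field_simp
        _ ≤ Real.exp (y⁻¹ - 4) * (Real.exp (-y⁻¹) * (2 * y) ^ 2) := by
            apply mul_le_mul_of_nonneg_right h3 (by positivity)
        _ = Real.exp (-(4:ℝ)) * (2 * y) ^ 2 := by
            rw [show Real.exp (y⁻¹ - 4) * (Real.exp (-y⁻¹) * (2 * y) ^ 2)
                = (Real.exp (y⁻¹ - 4) * Real.exp (-y⁻¹)) * (2 * y) ^ 2 by ring,
              ← Real.exp_add]
            ring_nf
    -- now the final bound
    have habs : |y⁻¹ ^ 2 * Real.exp (-y⁻¹) * -(2 * x) / Real.exp (-4)|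
        = y⁻¹ ^ 2 * Real.exp (-y⁻¹) * (2 * X) / Real.exp (-4) := by
      rw [abs_div, abs_of_pos (Real.exp_pos _), abs_mul]
      rw [abs_of_nonneg (by positivity : (0:ℝ) ≤ y⁻¹ ^ 2 * Real.exp (-y⁻¹))]
      rw [abs_neg, abs_mul]
      norm_num
      exact Or.inl hX.symm
    rw [habs, div_le_iff₀ (Real.exp_pos _)]
    -- y⁻¹^2 * exp(-y⁻¹) * 2X ≤ 6 exp(-4)
    have hyne : y ≠ 0 := h.ne'
    have e2 : y⁻¹ ^ 2 * Real.exp (-y⁻¹) * (2 * X) * (y ^ 2 * (1 - 2 * y) ^ 2)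
        = (Real.exp (-y⁻¹) * (1 - 2 * y) ^ 2) * (2 * X) := by
      field_simp
    have e3 : (Real.exp (-(4:ℝ)) * (2 * y) ^ 2) * (2 * X)
        ≤ (6 * Real.exp (-4)) * (y ^ 2 * (1 - 2 * y) ^ 2) := by
      have := mul_le_mul_of_nonneg_left h8 (mul_nonneg (Real.exp_pos (-(4:ℝ))).le (sq_nonneg y))
      nlinarith [Real.exp_pos (-(4:ℝ)), sq_nonneg y]
    have e4 : (Real.exp (-y⁻¹) * (1 - 2 * y) ^ 2) * (2 * X)
        ≤ (Real.exp (-(4:ℝ)) * (2 * y) ^ 2) * (2 * X) := by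
      apply mul_le_mul_of_nonneg_right hEineq (by positivity)
    have hpos : (0:ℝ) < y ^ 2 * (1 - 2 * y) ^ 2 := by positivity
    rw [← mul_le_mul_iff_of_pos_right hpos, e2]
    calc (Real.exp (-y⁻¹) * (1 - 2 * y) ^ 2) * (2 * X)
        ≤ (Real.exp (-(4:ℝ)) * (2 * y) ^ 2) * (2 * X) := e4
      _ ≤ (6 * Real.exp (-4)) * (y ^ 2 * (1 - 2 * y) ^ 2) := e3

end

noncomputable section
variable {F : Type*} [NormedAddCommGroup F] [NormedSpace ℝ F]

lemma itD_zero_fun (k : ℕ) (x : ℝ) : iteratedDeriv k (fun _ : ℝ => (0 : F)) x = 0 := by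
  rw [iteratedDeriv_eq_iteratedFDeriv, iteratedFDeriv_zero_fun]
  rfl

lemma itD_const (k : ℕ) (hk : k ≠ 0) (c : F) (x : ℝ) :
    iteratedDeriv k (fun _ : ℝ => c) x = 0 := by
  rw [iteratedDeriv_eq_iteratedFDeriv, iteratedFDeriv_const_of_ne hk]
  rfl

lemma iteratedDeriv_psiB_zero (k : ℕ) {x : ℝ} (hx : 1/2 < |x|) :
    iteratedDeriv k psiB x = 0 := by
  have hopen : IsOpen {y : ℝ | 1/2 < |y|} := isOpen_lt continuous_const continuous_abs
  have hev : psiB =ᶠ[nhds x] (fun _ => (0:ℝ)) := by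
    filter_upwards [hopen.mem_nhds hx] with y hy
    exact psiB_zero hy.le
  rw [hev.iteratedDeriv_eq k, itD_zero_fun]

/-- The constants `D k`. -/
def DD : ℕ → ℝ := fun k =>
  max 1 (sSup ((fun x => |iteratedDeriv k psiB x|) '' Set.Icc (-1:ℝ) 1))

lemma DD_pos (k : ℕ) : 0 < DD k := lt_of_lt_of_le one_pos (le_max_left _ _)

lemma abs_iteratedDeriv_psiB_le (k : ℕ) (x : ℝ) : |iteratedDeriv k psiB x| ≤ DD k := by
  rcases le_or_gt |x| 1 with h | h
  · refine le_trans (le_csSup ?_ ?_) (le_max_right _ _)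
    · have hcont : Continuous (iteratedDeriv k psiB) := by
        have := (psiB_contDiff (n := ⊤)).continuous_iteratedDeriv
          (n := ((⊤:ℕ∞) : WithTop ℕ∞)) k
        apply this
        exact_mod_cast le_top
      exact (isCompact_Icc.image hcont.abs).bddAbove
    · exact ⟨x, abs_le.1 h, rfl⟩
  · rw [iteratedDeriv_psiB_zero k (by linarith), abs_zero]
    exact (DD_pos k).le

lemma itD_add {f g : ℝ → F} {k : ℕ} (hf : ContDiff ℝ k f) (hg : ContDiff ℝ k g) (x : ℝ) :
    iteratedDeriv k (fun s => f s + g s) x = iteratedDeriv k f x + iteratedDeriv k g x := by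
  simp only [iteratedDeriv_eq_iteratedFDeriv]
  rw [iteratedFDeriv_add_apply' hf.contDiffAt hg.contDiffAt]
  rfl

lemma itD_sum {ι : Type*} [Fintype ι] {f : ι → ℝ → F} {k : ℕ}
    (h : ∀ j, ContDiff ℝ k (f j)) (x : ℝ) :
    iteratedDeriv k (fun s => ∑ j, f j s) x = ∑ j, iteratedDeriv k (f j) x := by
  simp only [iteratedDeriv_eq_iteratedFDeriv]
  rw [show (fun s => ∑ j, f j s) = (∑ j ∈ Finset.univ, f j ·) from rfl,
    iteratedFDeriv_sum (fun j _ => h j)]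
  simp

lemma itD_smul_const {h : ℝ → ℝ} {k : ℕ} (hh : ContDiff ℝ k h) (c : F) (x : ℝ) :
    iteratedDeriv k (fun s => h s • c) x = iteratedDeriv k h x • c := by
  have key := (ContinuousLinearMap.toSpanSingleton ℝ c).iteratedFDeriv_comp_left hh.contDiffAt (x := x) le_rfl
  simp only [iteratedDeriv_eq_iteratedFDeriv]
  rw [show (fun s => h s • c) = (ContinuousLinearMap.toSpanSingleton ℝ c) ∘ h from rfl, key]
  simp [ContinuousLinearMap.toSpanSingleton_apply]

lemma itD_linear {k : ℕ} (hk : k ≠ 0) (w cst : F) (x : ℝ) :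
    iteratedDeriv k (fun s : ℝ => s • w + cst) x = if k = 1 then w else 0 := by
  obtain ⟨l, rfl⟩ := Nat.exists_eq_succ_of_ne_zero hk
  rw [iteratedDeriv_succ']
  have hder : (deriv fun s : ℝ => s • w + cst) = fun _ => w := by
    funext s
    rw [deriv_add_const, deriv_smul_const differentiableAt_id, deriv_id'']
    simp
  rw [hder]
  rcases Nat.eq_zero_or_pos l with rfl | hp
  · simp
  · rw [itD_const l hp.ne' w x]
    have : l + 1 ≠ 1 := by omega
    rw [if_neg this]

lemma itD_psiB_affine (k : ℕ) (c m x : ℝ) :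
    iteratedDeriv k (fun s => psiB (c * s + m)) x
      = c ^ k * iteratedDeriv k psiB (c * x + m) := by
  have h1 : ContDiff ℝ k (fun y : ℝ => psiB (y + m)) :=
    psiB_contDiff.comp (contDiff_id.add contDiff_const)
  calc iteratedDeriv k (fun s => psiB (c * s + m)) x
      = iteratedDeriv k (fun s => (fun y => psiB (y + m)) (c * s)) x := rfl
    _ = c ^ k * iteratedDeriv k (fun y => psiB (y + m)) (c * x) := by
        rw [iteratedDeriv_comp_const_mul h1 c]
    _ = c ^ k * iteratedDeriv k psiB (c * x + m) := by
        rw [iteratedDeriv_comp_add_const]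

end


set_option maxHeartbeats 2000000 in
/-- there are constants `D_k > 0`, each depending only on `k`, such that if a
line `ℓ` through `z₀ ∈ S^{n-1}` passes within `ρ` of `d+1` distinct points of `B̂^n` whose
projections to `ℓ` are `κ`-separated (`1/10 > κ ≥ 10ρ`), then there is a `C^{d+1}` curve
`ω : [-1,1] → B^n` through `z₀, z_1, …, z_{d+1}` with `M_1(ω) ≤ 1` and
`M_k(ω) ≤ D_k·ρ/κ^k` for `2 ≤ k ≤ d+1`. -/
theorem stmt15 :
    ∃ D : ℕ → ℝ, (∀ k, 2 ≤ k → 0 < D k) ∧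
      ∀ n d : ℕ, 1 ≤ n → 1 ≤ d →
        ∀ z : Fin (d + 1) → En n, Function.Injective z →
          (∀ i, z i ∈ Metric.closedBall (0 : En n) (1 / 3)) →
          ∀ z₀ ∈ Metric.sphere (0 : En n) 1,
            ∀ v : En n, ‖v‖ = 1 →
              ∀ ρ κ : ℝ, 0 < ρ → κ < 1 / 10 → 10 * ρ ≤ κ →
                (∀ i, distLine n z₀ v (z i) ≤ ρ) →
                (∀ i j, i ≠ j →
                  κ ≤ dist (projLine n z₀ v (z i)) (projLine n z₀ v (z j))) →
                ∃ ω : ℝ → En n, ContDiff ℝ (d + 1 : ℕ) ω ∧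
                  (∀ t ∈ Set.Icc (-1 : ℝ) 1, ω t ∈ Metric.closedBall (0 : En n) 1) ∧
                  (∃ t ∈ Set.Icc (-1 : ℝ) 1, ω t = z₀) ∧
                  (∀ i, ∃ t ∈ Set.Icc (-1 : ℝ) 1, ω t = z i) ∧
                  Mkc n 1 ω ≤ 1 ∧
                  ∀ k : ℕ, 2 ≤ k → k ≤ d + 1 → Mkc n k ω ≤ D k * ρ / κ ^ k := by
  refine ⟨DD, fun k _ => DD_pos k, ?_⟩
  intro n d hn hd z hzinj hz3 z₀ hz₀ v hv ρ κ hρ hκ10 hκρ hdist hproj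
  haveI hfinne : Nonempty (Fin n) := ⟨⟨0, hn⟩⟩
  haveI hjne : Nonempty (Fin (d+1)) := ⟨0⟩
  haveI hiccne : Nonempty ↥(Set.Icc (-1:ℝ) 1) := ⟨⟨0, by norm_num⟩⟩
  have hκpos : 0 < κ := lt_of_lt_of_le (by linarith) hκρ
  have hρκ : ρ ≤ κ / 10 := by linarith
  have hρ100 : ρ < 1/100 := by linarith
  have hz₀n : ‖z₀‖ = 1 := by rwa [mem_sphere_zero_iff_norm] at hz₀
  have hz_norm : ∀ i, ‖z i‖ ≤ 1/3 := fun i => by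
    have := hz3 i; rwa [mem_closedBall_zero_iff] at this
  -- WLOG the direction has nonpositive inner product with z₀
  obtain ⟨w, hw, hwdist, hwproj, hα_nonpos⟩ :
      ∃ w : En n, ‖w‖ = 1 ∧ (∀ i, distLine n z₀ w (z i) ≤ ρ) ∧
        (∀ i j, i ≠ j → κ ≤ dist (projLine n z₀ w (z i)) (projLine n z₀ w (z j))) ∧
        ⟪z₀, w⟫ ≤ 0 := by
    rcases le_or_gt ⟪z₀, v⟫ 0 with h | h
    · exact ⟨v, hv, hdist, hproj, h⟩
    · have hPL : ∀ p, projLine n z₀ (-v) p = projLine n z₀ v p := by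
        intro p
        simp [projLine, inner_neg_right, smul_neg, neg_smul, neg_neg]
      refine ⟨-v, by simpa using hv, ?_, ?_, ?_⟩
      · intro i; rw [distLine, hPL]; exact hdist i
      · intro i j hij; rw [hPL, hPL]; exact hproj i j hij
      · rw [inner_neg_right]; linarith
  clear hdist hproj hv v
  set α : ℝ := ⟪z₀, w⟫ with hα
  have hα_abs : |α| ≤ 1 := by
    rw [hα]
    calc |⟪z₀, w⟫| ≤ ‖z₀‖ * ‖w‖ := abs_real_inner_le_norm _ _
      _ = 1 := by rw [hz₀n, hw]; ring
  set t : Fin (d+1) → ℝ := fun j => ⟪z j - z₀, w⟫ with ht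
  set e : Fin (d+1) → En n := fun j => z j - (z₀ + t j • w) with he
  have hz_decomp : ∀ j, z₀ + t j • w + e j = z j := by
    intro j; rw [he]; module
  have he_norm : ∀ j, ‖e j‖ ≤ ρ := by
    intro j
    have h1 := hwdist j
    rw [distLine, projLine, dist_eq_norm] at h1
    exact h1
  have he_orth : ∀ j, ⟪w, e j⟫ = 0 := by
    intro j
    have h1 : t j = ⟪z j, w⟫ - ⟪z₀, w⟫ := inner_sub_left _ _ _
    rw [he, inner_sub_right, inner_add_right, real_inner_smul_right,
      real_inner_self_eq_norm_mul_norm, hw, h1, real_inner_comm w (z j),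
      real_inner_comm w z₀]
    ring
  have ht_sep : ∀ i j, i ≠ j → κ ≤ |t i - t j| := by
    intro i j hij
    have h1 := hwproj i j hij
    rw [projLine, projLine, dist_eq_norm,
      show z₀ + (⟪z i - z₀, w⟫:ℝ) • w - (z₀ + (⟪z j - z₀, w⟫:ℝ) • w)
        = (t i - t j) • w by rw [ht]; module,
      norm_smul, hw, mul_one, Real.norm_eq_abs] at h1
    exact h1
  have hp_norm : ∀ j, ‖z₀ + t j • w‖ ≤ 1/3 + ρ := by
    intro j
    have h2 : z₀ + t j • w = z j - e j := by rw [he]; module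
    rw [h2]
    calc ‖z j - e j‖ ≤ ‖z j‖ + ‖e j‖ := norm_sub_le _ _
      _ ≤ 1/3 + ρ := add_le_add (hz_norm j) (he_norm j)
  have hq_expand : ∀ u : ℝ, ‖z₀ + u • w‖^2 = 1 + 2*α*u + u^2 := by
    intro u
    rw [norm_add_sq_real, real_inner_smul_right, norm_smul, hz₀n, hw,
      Real.norm_eq_abs]
    rw [← hα]
    rw [mul_one, one_pow, sq_abs]
    ring
  have Hq : ∀ j, t j^2 + 2*α*(t j) + 3/4 ≤ 0 := by
    intro j
    have h1 : ‖z₀ + t j • w‖^2 ≤ (1/3 + ρ)^2 := by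
      have := hp_norm j
      nlinarith [norm_nonneg (z₀ + t j • w)]
    rw [hq_expand] at h1
    nlinarith [mul_lt_mul_of_pos_left hρ100 hρ]
  have ht_pos : ∀ j, 3/8 ≤ t j := by
    intro j
    have h1 := Hq j
    have h2 := abs_le.1 hα_abs
    have htpos0 : 0 < t j := by
      by_contra hcon
      push_neg at hcon
      nlinarith [mul_nonneg (neg_nonneg.2 hα_nonpos) (neg_nonneg.2 hcon), sq_nonneg (t j)]
    nlinarith [mul_le_mul_of_nonneg_right h2.1 htpos0.le, sq_nonneg (t j)]
  have ht_ub : ∀ j, t j ≤ 4/3 := by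
    intro j
    calc t j ≤ |t j| := le_abs_self _
      _ ≤ ‖z j - z₀‖ * ‖w‖ := abs_real_inner_le_norm _ _
      _ = ‖z j - z₀‖ := by rw [hw, mul_one]
      _ ≤ ‖z j‖ + ‖z₀‖ := norm_sub_le _ _
      _ ≤ 4/3 := by rw [hz₀n]; linarith [hz_norm j]
  -- the sup of the t's
  set T : ℝ := Finset.univ.sup' Finset.univ_nonempty t with hT
  have ht_le_T : ∀ j, t j ≤ T := fun j => Finset.le_sup' t (Finset.mem_univ j)
  have hT_ub : T ≤ 4/3 := Finset.sup'_le _ _ (fun j _ => ht_ub j)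
  have hT_lb : 3/8 ≤ T := le_trans (ht_pos 0) (ht_le_T 0)
  obtain ⟨jT, -, hjT⟩ := Finset.exists_mem_eq_sup' Finset.univ_nonempty t
  set a : ℝ := T/2 with ha
  have ha_pos : 0 < a := by rw [ha]; linarith
  have ha_ub : a ≤ 2/3 := by rw [ha]; linarith
  set κ' : ℝ := 9/10 * κ with hκ'
  have hκ'pos : 0 < κ' := by rw [hκ']; linarith
  have hκ'small : κ' ≤ 9/100 := by rw [hκ']; linarith
  set c : ℝ := a / κ' with hc
  have hc_pos : 0 < c := div_pos ha_pos hκ'pos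
  have hc_le : c ≤ 1/κ := by
    rw [hc, hκ', div_le_div_iff₀ (by linarith) hκpos]
    have h1 := mul_le_mul_of_nonneg_right ha_ub hκpos.le
    linarith
  have hcρ : c * ρ ≤ a / 9 := by
    rw [hc, div_mul_eq_mul_div, div_le_div_iff₀ hκ'pos (by norm_num)]
    rw [hκ']
    nlinarith [mul_le_mul_of_nonneg_left hρκ ha_pos.le]
  set m : Fin (d+1) → ℝ := fun j => (a - t j)/κ' with hm
  set ω : ℝ → En n :=
    fun s => (s • (a • w) + (z₀ + a • w)) + ∑ j, psiB (c * s + m j) • e j with hω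
  have hum : ∀ (s : ℝ) (j : Fin (d+1)), c * s + m j = (a * s + a - t j)/κ' := by
    intro s j
    rw [hc, hm]
    field_simp
    ring
  -- smoothness
  have haff_cd : ∀ (k : ℕ) (j : Fin (d+1)), ContDiff ℝ k (fun s : ℝ => psiB (c * s + m j)) := by
    intro k j
    exact psiB_contDiff.comp ((contDiff_const.mul contDiff_id).add contDiff_const)
  have hterm_cd : ∀ (k : ℕ) (j : Fin (d+1)),
      ContDiff ℝ k (fun s : ℝ => psiB (c * s + m j) • e j) :=
    fun k j => (haff_cd k j).smul contDiff_const
  have hf1_cd : ∀ k : ℕ, ContDiff ℝ k (fun s : ℝ => s • (a • w) + (z₀ + a • w)) :=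
    fun k => (contDiff_id.smul contDiff_const).add contDiff_const
  have hω_cd : ∀ k : ℕ, ContDiff ℝ k ω :=
    fun k => (hf1_cd k).add (ContDiff.sum fun j _ => hterm_cd k j)
  -- derivative formula
  have hformula : ∀ (k : ℕ), k ≠ 0 → ∀ s : ℝ,
      iteratedDeriv k ω s = (if k = 1 then a • w else 0)
        + ∑ j, (c ^ k * iteratedDeriv k psiB (c * s + m j)) • e j := by
    intro k hk s
    rw [hω]
    rw [itD_add (hf1_cd k) (ContDiff.sum fun j _ => hterm_cd k j) s,
      itD_linear hk, itD_sum (fun j => hterm_cd k j) s]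
    congr 1
    apply Finset.sum_congr rfl
    intro j _
    rw [itD_smul_const (haff_cd k j) (e j) s, itD_psiB_affine]
  -- collapsing the sum
  have collapse : ∀ (g : ℝ → ℝ), (∀ y, 1/2 < |y| → g y = 0) → ∀ s : ℝ,
      (∑ j, g (c * s + m j) • e j) = 0 ∨
      ∃ j₀, |c * s + m j₀| ≤ 1/2 ∧
        (∑ j, g (c * s + m j) • e j) = g (c * s + m j₀) • e j₀ := by
    intro g hg s
    by_cases hex : ∃ j₀, |c * s + m j₀| ≤ 1/2
    · obtain ⟨j₀, hj₀⟩ := hex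
      right
      refine ⟨j₀, hj₀, Finset.sum_eq_single j₀ (fun j _ hj => ?_) (by simp)⟩
      have hdiff : (c*s + m j) - (c*s + m j₀) = (t j₀ - t j)/κ' := by
        rw [hum, hum]
        field_simp
        ring
      have hsep : 10/9 ≤ |(c*s + m j) - (c*s + m j₀)| := by
        rw [hdiff, abs_div, abs_of_pos hκ'pos, le_div_iff₀ hκ'pos, hκ']
        have := ht_sep j₀ j (Ne.symm hj)
        nlinarith
      have hgt : 1/2 < |c*s + m j| := by
        have h3 : |(c*s + m j) - (c*s + m j₀)| ≤ |c*s + m j| + |c*s + m j₀| :=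
          abs_sub _ _
        linarith
      rw [hg _ hgt, zero_smul]
    · left
      push_neg at hex
      exact Finset.sum_eq_zero fun j _ => by rw [hg _ (hex j), zero_smul]
  -- coordinates vs norm
  have coord_le : ∀ (x : En n) (i : Fin n), |x i| ≤ ‖x‖ := by
    intro x i
    rw [EuclideanSpace.norm_eq]
    have h1 : ‖x i‖^2 ≤ ∑ j, ‖x j‖^2 :=
      Finset.single_le_sum (f := fun j => ‖x j‖^2) (fun j _ => sq_nonneg _)
        (Finset.mem_univ i)
    calc |x i| = Real.sqrt (‖x i‖^2) := by
          rw [Real.sqrt_sq_eq_abs, Real.norm_eq_abs, abs_abs]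
      _ ≤ Real.sqrt (∑ j, ‖x j‖^2) := Real.sqrt_le_sqrt h1
  -- nicer form of ω
  have hω_eq : ∀ s : ℝ, ω s = (z₀ + (a*s + a) • w) + ∑ j, psiB (c * s + m j) • e j := by
    intro s
    rw [hω]
    congr 1
    module
  -- the quadratic bound on the whole segment
  have hquad : ∀ u : ℝ, 0 ≤ u → u ≤ T → u^2 + 2*α*u ≤ 0 := by
    intro u hu0 huT
    have h1 : T^2 + 2*α*T + 3/4 ≤ 0 := by rw [hT, hjT]; exact Hq jT
    nlinarith [mul_nonneg (mul_nonneg hu0 (sub_nonneg.2 huT)) (by linarith : (0:ℝ) ≤ T)]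
  have hpsiB_zero' : ∀ y : ℝ, 1/2 < |y| → psiB y = 0 := fun y hy => psiB_zero hy.le
  refine ⟨ω, hω_cd (d+1), ?_, ?_, ?_, ?_, ?_⟩
  · -- stays in the unit ball
    intro s hs
    rw [mem_closedBall_zero_iff, hω_eq]
    obtain ⟨hs1, hs2⟩ := hs
    have hu0 : 0 ≤ a*s + a := by nlinarith
    have huT : a*s + a ≤ T := by rw [ha] at *; nlinarith
    rcases collapse psiB hpsiB_zero' s with hcase | ⟨j₀, hj₀, hcase⟩
    · rw [hcase, add_zero]
      have h2 : ‖z₀ + (a*s+a) • w‖^2 ≤ 1 := by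
        rw [hq_expand]
        nlinarith [hquad (a*s+a) hu0 huT]
      nlinarith [norm_nonneg (z₀ + (a*s+a) • w)]
    · rw [hcase]
      have hδ : |(a*s + a) - t j₀| ≤ κ'/2 := by
        have h3 : (a*s + a) - t j₀ = κ' * (c*s + m j₀) := by
          rw [hum]
          field_simp
        rw [h3, abs_mul, abs_of_pos hκ'pos]
        nlinarith [abs_nonneg (c*s + m j₀)]
      have hδ' : |(a*s + a) - t j₀| ≤ 1/20 := by linarith [hκ'small]
      have h4 : ‖z₀ + (a*s+a) • w‖ ≤ 1 - ρ := by
        have h5 : ‖z₀ + (a*s+a) • w‖^2 ≤ (1-ρ)^2 := by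
          rw [hq_expand]
          obtain ⟨hd1, hd2⟩ := abs_le.1 hδ'
          have h6 := Hq j₀
          have h7 := ht_ub j₀
          have h8 := ht_pos j₀
          have h9 := abs_le.1 hα_abs
          nlinarith
        nlinarith [norm_nonneg (z₀ + (a*s+a) • w), hρ]
      calc ‖(z₀ + (a*s+a) • w) + psiB (c*s + m j₀) • e j₀‖
          ≤ ‖z₀ + (a*s+a) • w‖ + ‖psiB (c*s + m j₀) • e j₀‖ := norm_add_le _ _
        _ ≤ (1 - ρ) + ρ := by
            refine add_le_add h4 ?_
            rw [norm_smul, Real.norm_eq_abs, abs_of_nonneg (psiB_nonneg _)]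
            calc psiB (c*s + m j₀) * ‖e j₀‖ ≤ 1 * ρ :=
                mul_le_mul (psiB_le_one _) (he_norm j₀) (norm_nonneg _) one_pos.le
              _ = ρ := one_mul ρ
        _ = 1 := by ring
  · -- passes through z₀
    refine ⟨-1, ⟨le_refl _, by norm_num⟩, ?_⟩
    rw [hω_eq]
    have hzero : ∀ j : Fin (d+1), psiB (c * (-1) + m j) = 0 := by
      intro j
      apply psiB_zero
      rw [hum]
      rw [abs_div, abs_of_pos hκ'pos, le_div_iff₀ hκ'pos]
      have h1 := ht_pos j
      have h2 : |a * (-1) + a - t j| = t j := by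
        rw [abs_of_nonpos (by linarith)]
        ring
      rw [h2]
      linarith [hκ'small]
    rw [Finset.sum_eq_zero (fun j _ => by rw [hzero j, zero_smul]), add_zero]
    rw [show a * (-1) + a = 0 by ring, zero_smul, add_zero]
  · -- passes through the z i
    intro i
    refine ⟨t i / a - 1, ⟨?_, ?_⟩, ?_⟩
    · have h0 : 0 ≤ t i / a := div_nonneg (by linarith [ht_pos i]) ha_pos.le
      linarith
    · have h0 : t i / a ≤ 2 := by
        rw [div_le_iff₀ ha_pos]
        linarith [ht_le_T i]
      linarith
    rw [hω_eq]
    have hu_eq : a * (t i / a - 1) + a = t i := by rw [mul_sub, mul_div_cancel₀ _ ha_pos.ne']; ring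
    have hsum : (∑ j, psiB (c * (t i / a - 1) + m j) • e j) = e i := by
      rw [Finset.sum_eq_single i]
      · rw [hum, hu_eq, sub_self, zero_div, psiB_zero_val, one_smul]
      · intro j _ hj
        rw [hum, hu_eq]
        rw [psiB_zero, zero_smul]
        rw [abs_div, abs_of_pos hκ'pos, le_div_iff₀ hκ'pos]
        have := ht_sep i j (Ne.symm hj)
        calc 1/2 * κ' ≤ κ := by rw [hκ']; linarith
          _ ≤ |t i - t j| := this
      · intro h
        exact absurd (Finset.mem_univ i) h
    rw [hsum, hu_eq, hz_decomp i]
  · -- M_1 ≤ 1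
    apply ciSup_le
    rintro ⟨s, hs1, hs2⟩
    apply ciSup_le
    intro i
    simp only
    rw [hformula 1 one_ne_zero s, if_pos rfl]
    rcases collapse (fun y => c ^ 1 * iteratedDeriv 1 psiB y)
        (fun y hy => by
          show c ^ 1 * iteratedDeriv 1 psiB y = 0
          rw [iteratedDeriv_psiB_zero 1 hy, mul_zero]) s with
      hcase | ⟨j₀, hj₀, hcase⟩
    · rw [hcase, add_zero]
      calc |(a • w) i| ≤ ‖a • w‖ := coord_le _ i
        _ = a := by rw [norm_smul, Real.norm_eq_abs, abs_of_pos ha_pos, hw, mul_one]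
        _ ≤ 1 := by linarith
    · rw [hcase]
      set r : ℝ := c ^ 1 * iteratedDeriv 1 psiB (c * s + m j₀) with hr
      have hr_abs : |r| ≤ 6 * c := by
        rw [hr, pow_one, abs_mul, abs_of_pos hc_pos, iteratedDeriv_one]
        calc c * |deriv psiB (c * s + m j₀)| ≤ c * 6 :=
            mul_le_mul_of_nonneg_left (abs_deriv_psiB_le _) hc_pos.le
          _ = 6 * c := by ring
      have hnorm_sq : ‖a • w + r • e j₀‖^2 = a^2 + r^2 * ‖e j₀‖^2 := by
        rw [norm_add_sq_real]
        rw [real_inner_smul_left, real_inner_smul_right, he_orth j₀]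
        rw [norm_smul, norm_smul, Real.norm_eq_abs, Real.norm_eq_abs, hw, mul_one]
        rw [mul_pow, sq_abs, sq_abs]
        ring
      have hre : |r| * ‖e j₀‖ ≤ 2/3 * a := by
        calc |r| * ‖e j₀‖ ≤ (6*c) * ρ :=
            mul_le_mul hr_abs (he_norm j₀) (norm_nonneg _) (by linarith [hc_pos])
          _ = 6 * (c * ρ) := by ring
          _ ≤ 6 * (a/9) := by linarith [hcρ]
          _ = 2/3 * a := by ring
      have hnorm_le : ‖a • w + r • e j₀‖ ≤ 1 := by
        have h2 : ‖a • w + r • e j₀‖^2 ≤ 1 := by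
          rw [hnorm_sq]
          have hsq : ∀ rr : ℝ, rr^2 * ‖e j₀‖^2 = (|rr| * ‖e j₀‖)^2 := fun rr => by
            rw [mul_pow, sq_abs]
          rw [hsq r]
          nlinarith [mul_nonneg (abs_nonneg r) (norm_nonneg (e j₀))]
        nlinarith [norm_nonneg (a • w + r • e j₀)]
      calc |(a • w + r • e j₀) i| ≤ ‖a • w + r • e j₀‖ := coord_le _ i
        _ ≤ 1 := hnorm_le
  · -- higher derivatives
    intro k hk2 hkd
    have hbound_nonneg : 0 ≤ DD k * ρ / κ^k :=
      div_nonneg (mul_nonneg (DD_pos k).le hρ.le) (pow_nonneg hκpos.le k)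
    apply ciSup_le
    rintro ⟨s, hs1, hs2⟩
    apply ciSup_le
    intro i
    simp only
    rw [hformula k (by omega) s, if_neg (by omega)]
    rcases collapse (fun y => c ^ k * iteratedDeriv k psiB y)
        (fun y hy => by
          show c ^ k * iteratedDeriv k psiB y = 0
          rw [iteratedDeriv_psiB_zero k hy, mul_zero]) s with
      hcase | ⟨j₀, hj₀, hcase⟩
    · rw [hcase, add_zero]
      simpa using hbound_nonneg
    · rw [hcase, zero_add]
      set r : ℝ := c ^ k * iteratedDeriv k psiB (c * s + m j₀) with hr
      have hr_abs : |r| ≤ c^k * DD k := by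
        rw [hr, abs_mul, abs_of_pos (pow_pos hc_pos k)]
        exact mul_le_mul_of_nonneg_left (abs_iteratedDeriv_psiB_le k _)
          (pow_pos hc_pos k).le
      calc |(r • e j₀) i| ≤ ‖r • e j₀‖ := coord_le _ i
        _ = |r| * ‖e j₀‖ := by rw [norm_smul, Real.norm_eq_abs]
        _ ≤ (c^k * DD k) * ρ :=
            mul_le_mul hr_abs (he_norm j₀) (norm_nonneg _)
              (mul_nonneg (pow_pos hc_pos k).le (DD_pos k).le)
        _ ≤ ((1/κ)^k * DD k) * ρ := by
            have h5 : c^k ≤ (1/κ)^k := pow_le_pow_left₀ hc_pos.le hc_le k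
            exact mul_le_mul_of_nonneg_right
              (mul_le_mul_of_nonneg_right h5 (DD_pos k).le) hρ.le
        _ = DD k * ρ / κ^k := by
            rw [div_pow, one_pow]
            field_simp
end

section
/- Let n ≥ 2. There exists a constant θ_n > 0, depending only on n, with the following property: let 0 < ε ≤ 1/(10√n), let z_0 ∈ S^{n-1}, and let N be a natural number. Then for every collection U of q grid ε-cubes contained in B̂^n with q ≥ θ_n · N · (1/ε)^{n-1}, there exists a straight line ℓ in ℝ^n passing through z_0 which intersects at least N of the ε-cubes in U. -/
open scoped RealInnerProductSpace
lemma stmt16_abs_apply_le_norm {n : ℕ} (x : En n) (i : Fin n) : |x i| ≤ ‖x‖ := by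
  rw [EuclideanSpace.norm_eq, ← Real.sqrt_sq_eq_abs]
  apply Real.sqrt_le_sqrt
  have h : x i ^ 2 = ‖x i‖ ^ 2 := by simp [Real.norm_eq_abs, sq_abs]
  rw [h]
  exact Finset.single_le_sum (f := fun j => ‖x j‖ ^ 2) (fun j _ => sq_nonneg _) (Finset.mem_univ i)

lemma stmt16_norm_le {n : ℕ} (x : En n) (M : ℝ) (hM : 0 ≤ M) (h : ∀ i, |x i| ≤ M) :
    ‖x‖ ≤ Real.sqrt n * M := by
  rw [EuclideanSpace.norm_eq]
  have h1 : ∑ i, ‖x i‖ ^ 2 ≤ (n : ℝ) * M ^ 2 := by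
    calc ∑ i, ‖x i‖ ^ 2 ≤ ∑ _i : Fin n, M ^ 2 := by
          apply Finset.sum_le_sum
          intro i _
          have := h i
          rw [Real.norm_eq_abs]
          nlinarith [abs_nonneg (x i)]
      _ = (n : ℝ) * M ^ 2 := by simp [mul_comm]
  calc Real.sqrt (∑ i, ‖x i‖ ^ 2) ≤ Real.sqrt ((n:ℝ) * M ^ 2) := Real.sqrt_le_sqrt h1
    _ = Real.sqrt n * M := by
        rw [Real.sqrt_mul (Nat.cast_nonneg n), Real.sqrt_sq hM]

lemma stmt16_floor {a b δ : ℝ} (hδ : 0 < δ) (h : ⌊a/δ⌋ = ⌊b/δ⌋) : |a - b| ≤ δ := by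
  have ha1 : a/δ < ⌊a/δ⌋ + 1 := Int.lt_floor_add_one _
  have ha2 : (⌊a/δ⌋:ℝ) ≤ a/δ := Int.floor_le _
  have hb1 : b/δ < ⌊b/δ⌋ + 1 := Int.lt_floor_add_one _
  have hb2 : (⌊b/δ⌋:ℝ) ≤ b/δ := Int.floor_le _
  rw [h] at ha1 ha2
  rw [abs_le]
  have h3 : a / δ * δ = a := by field_simp
  have h4 : b / δ * δ = b := by field_simp
  constructor <;> nlinarith


set_option maxHeartbeats 1000000 in
/-- there is `θ_n > 0` such that for `0 < ε ≤ 1/(10√n)`, `z₀ ∈ S^{n-1}`,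
`N : ℕ`, and any collection `U` of grid `ε`-cubes inside `B̂^n` with
`|U| ≥ θ_n·N·(1/ε)^{n-1}`, some line through `z₀` meets at least `N` cubes of `U`. -/
theorem stmt16 (n : ℕ) (hn : 2 ≤ n) :
    ∃ θ : ℝ, 0 < θ ∧
      ∀ ε : ℝ, 0 < ε → ε ≤ 1 / (10 * Real.sqrt n) →
        ∀ z₀ ∈ Metric.sphere (0 : En n) 1, ∀ N : ℕ,
          ∀ U : Finset (Fin n → ℤ),
            (∀ α ∈ U, gridCube n ε α ⊆ Metric.closedBall (0 : En n) (1 / 3)) →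
            θ * N * (1 / ε) ^ (n - 1) ≤ (U.card : ℝ) →
            ∃ v : En n, ‖v‖ = 1 ∧
              N ≤ {α : Fin n → ℤ |
                α ∈ U ∧ (gridCube n ε α ∩ lineThrough n z₀ v).Nonempty}.ncard := by
  have hn1 : (1:ℝ) ≤ (n:ℝ) := by exact_mod_cast Nat.one_le_of_lt hn
  have hn0 : (n:ℝ) ≠ 0 := by positivity
  have hn3 : (1:ℝ) ≤ (n:ℝ)^3 := by
    calc (1:ℝ) = 1^3 := by norm_num
      _ ≤ (n:ℝ)^3 := pow_le_pow_left₀ (by norm_num) hn1 3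
  refine ⟨(88 * (n:ℝ)^3) ^ (n-1), by positivity, ?_⟩
  intro ε hε hεle z₀ hz₀ N U hU hcard
  have hz : ‖z₀‖ = 1 := by simpa using hz₀
  rcases Nat.eq_zero_or_pos N with rfl | hNpos
  · exact ⟨z₀, hz, Nat.zero_le _⟩
  have hsqrtn : (1:ℝ) ≤ Real.sqrt n := by
    rw [show (1:ℝ) = Real.sqrt 1 by simp]
    exact Real.sqrt_le_sqrt hn1
  have hsqrtn' : Real.sqrt n ≤ n := by
    nlinarith [Real.sq_sqrt (by positivity : (0:ℝ) ≤ (n:ℝ)), Real.sqrt_nonneg (n:ℝ)]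
  have hε1 : ε ≤ 1 := by
    refine le_trans hεle ?_
    rw [div_le_one (by positivity)]
    linarith
  set δ : ℝ := ε / (8 * (n:ℝ)^3) with hδdef
  clear_value δ
  have hδ : 0 < δ := by rw [hδdef]; positivity
  have hδ1 : δ ≤ 1 := by
    rw [hδdef, div_le_one (by positivity)]
    linarith
  -- argmax coordinate of z₀
  obtain ⟨i₀, -, hi₀⟩ := Finset.exists_max_image (Finset.univ : Finset (Fin n))
    (fun i => |z₀ i|) ⟨⟨0, by omega⟩, Finset.mem_univ _⟩
  have hz₀le : ∀ i, |z₀ i| ≤ 1 := fun i => (stmt16_abs_apply_le_norm z₀ i).trans (le_of_eq hz)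
  have hi₀big : 1 ≤ Real.sqrt n * |z₀ i₀| := by
    have := stmt16_norm_le z₀ |z₀ i₀| (abs_nonneg _) (fun i => hi₀ i (Finset.mem_univ i))
    rw [hz] at this; exact this
  -- centers of cubes
  set c : (Fin n → ℤ) → En n :=
    fun α => (WithLp.equiv 2 (Fin n → ℝ)).symm (fun i => ((α i : ℝ) + 1/2) * ε) with hcdef
  have hcapp : ∀ α i, c α i = ((α i : ℝ) + 1/2) * ε := fun α i => rfl
  clear_value c
  have hcmem : ∀ α, c α ∈ gridCube n ε α := by
    intro α i
    rw [hcapp]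
    have h1 : ((α i : ℝ) + 1/2) * ε - (α i : ℝ) * ε = ε/2 := by ring
    have h2 : ((α i : ℝ) + 1) * ε - ((α i : ℝ) + 1/2) * ε = ε/2 := by ring
    constructor <;> linarith
  have hcball : ∀ α ∈ U, ‖c α‖ ≤ 1/3 := by
    intro α hα
    have := hU α hα (hcmem α)
    simpa [Metric.mem_closedBall, dist_zero_right] using this
  -- central projection to the hyperplane through 0 orthogonal to z₀
  set s : En n → ℝ := fun q => 1 - ⟪q, z₀⟫ with hsdef
  clear_value s
  have hs_bounds : ∀ q : En n, ‖q‖ ≤ 1/3 → 2/3 ≤ s q ∧ s q ≤ 4/3 := by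
    intro q hq
    have h1 : |⟪q, z₀⟫| ≤ 1/3 := by
      have h2 := abs_real_inner_le_norm q z₀
      rw [hz] at h2
      nlinarith [abs_nonneg ⟪q, z₀⟫]
    rw [abs_le] at h1
    constructor
    · simp only [hsdef]; linarith [h1.1, h1.2]
    · simp only [hsdef]; linarith [h1.1, h1.2]
  set Y : En n → En n := fun q => z₀ + (s q)⁻¹ • (q - z₀) with hYdef
  clear_value Y
  have hzz : ⟪z₀, z₀⟫ = 1 := by
    rw [real_inner_self_eq_norm_sq, hz]; norm_num
  have hYinner : ∀ q : En n, ‖q‖ ≤ 1/3 → ⟪Y q, z₀⟫ = 0 := by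
    intro q hq
    obtain ⟨hs1, hs2⟩ := hs_bounds q hq
    have hsne : s q ≠ 0 := ne_of_gt (by linarith)
    have key : ⟪q - z₀, z₀⟫ = -(s q) := by
      rw [inner_sub_left, hzz]
      simp only [hsdef]
      ring
    simp only [hYdef, inner_add_left, real_inner_smul_left, key, hzz]
    rw [mul_neg, inv_mul_cancel₀ hsne]
    ring
  have hYq : ∀ q : En n, ‖q‖ ≤ 1/3 → z₀ + s q • (Y q - z₀) = q := by
    intro q hq
    obtain ⟨hs1, hs2⟩ := hs_bounds q hq
    have hsne : s q ≠ 0 := ne_of_gt (by linarith)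
    simp only [hYdef, add_sub_cancel_left, smul_smul, mul_inv_cancel₀ hsne, one_smul]
    abel
  have hYnorm : ∀ q : En n, ‖q‖ ≤ 1/3 → ‖Y q‖ ≤ 3 := by
    intro q hq
    obtain ⟨hs1, hs2⟩ := hs_bounds q hq
    have hspos : (0:ℝ) < s q := by linarith
    have hsinv : (s q)⁻¹ ≤ 3/2 := by
      rw [inv_le_comm₀ hspos (by norm_num)]
      norm_num
      linarith
    have hsinv0 : (0:ℝ) ≤ (s q)⁻¹ := by positivity
    have hq1 : ‖q - z₀‖ ≤ 4/3 := by
      calc ‖q - z₀‖ ≤ ‖q‖ + ‖z₀‖ := norm_sub_le _ _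
        _ ≤ 4/3 := by rw [hz]; linarith
    have hYexp : Y q = z₀ + (s q)⁻¹ • (q - z₀) := by simp only [hYdef]
    rw [hYexp]
    calc ‖z₀ + (s q)⁻¹ • (q - z₀)‖ ≤ ‖z₀‖ + ‖(s q)⁻¹ • (q - z₀)‖ := norm_add_le _ _
      _ = 1 + |(s q)⁻¹| * ‖q - z₀‖ := by rw [norm_smul, hz, Real.norm_eq_abs]
      _ ≤ 3 := by
          rw [abs_of_nonneg hsinv0]
          nlinarith [norm_nonneg (q - z₀)]
  -- the cell map
  set K : ℕ := ⌈(3:ℝ)/δ⌉₊ + 1 with hKdef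
  clear_value K
  have hK3 : 3/δ ≤ (K:ℝ) := by
    refine le_trans (Nat.le_ceil _) ?_
    push_cast [hKdef]; linarith
  have hK2 : (K:ℝ) ≤ 3/δ + 2 := by
    have := Nat.ceil_lt_add_one (by positivity : (0:ℝ) ≤ 3/δ)
    push_cast [hKdef]; linarith
  classical
  set f : (Fin n → ℤ) → (Fin n → ℤ) :=
    fun α i => if i = i₀ then 0 else ⌊Y (c α) i / δ⌋ with hfdef
  clear_value f
  set T : Finset (Fin n → ℤ) :=
    Fintype.piFinset (fun i => if i = i₀ then ({0} : Finset ℤ) else Finset.Icc (-(K:ℤ)) K)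
    with hTdef
  clear_value T
  have hTne : T.Nonempty := by
    refine ⟨fun _ => 0, ?_⟩
    rw [hTdef, Fintype.mem_piFinset]
    intro i
    by_cases h : i = i₀
    · simp [h]
    · simp only [if_neg h, Finset.mem_Icc]
      constructor <;> omega
  have hmaps : ∀ α ∈ U, f α ∈ T := by
    intro α hα
    rw [hTdef, Fintype.mem_piFinset]
    intro i
    by_cases hi : i = i₀
    · simp [hfdef, hi]
    · simp only [hfdef, if_neg hi, Finset.mem_Icc]
      have hy : |Y (c α) i| ≤ 3 :=
        le_trans (stmt16_abs_apply_le_norm _ i) (hYnorm _ (hcball α hα))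
      rw [abs_le] at hy
      have hK3' : 3 ≤ (K:ℝ) * δ := by
        rw [div_le_iff₀ hδ] at hK3; linarith
      constructor
      · rw [Int.le_floor]
        push_cast
        rw [le_div_iff₀ hδ]
        linarith [hy.1]
      · have h1 : (⌊Y (c α) i / δ⌋ : ℝ) ≤ Y (c α) i / δ := Int.floor_le _
        have h2 : Y (c α) i / δ ≤ (K:ℝ) := by
          rw [div_le_iff₀ hδ]
          linarith [hy.2]
        exact_mod_cast h1.trans h2
  -- cardinality of T
  have hTcard : T.card = (2*K+1)^(n-1) := by
    rw [hTdef, Fintype.card_piFinset,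
      ← Finset.mul_prod_erase Finset.univ _ (Finset.mem_univ i₀)]
    have h0 : (if i₀ = i₀ then ({0} : Finset ℤ) else Finset.Icc (-(K:ℤ)) K) = {0} := if_pos rfl
    rw [h0, Finset.card_singleton, one_mul]
    have hcong : ∀ i ∈ Finset.univ.erase i₀,
        (if i = i₀ then ({0} : Finset ℤ) else Finset.Icc (-(K:ℤ)) K).card = 2*K+1 := by
      intro i hi
      rw [if_neg (Finset.ne_of_mem_erase hi), Int.card_Icc]
      omega
    rw [Finset.prod_congr rfl hcong, Finset.prod_const,
      Finset.card_erase_of_mem (Finset.mem_univ i₀), Finset.card_univ, Fintype.card_fin]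
  -- counting
  have hcount : T.card * N ≤ U.card := by
    have h2K : (2*(K:ℝ)+1) ≤ 88 * (n:ℝ)^3 * (1/ε) := by
      have h5 : (5:ℝ) ≤ 5/δ := by
        rw [le_div_iff₀ hδ]; linarith
      have h11 : 6/δ + 5 ≤ 11/δ := by
        have he : 11/δ - 6/δ = 5/δ := by ring
        linarith
      have heq : 11/δ = 88 * (n:ℝ)^3 * (1/ε) := by
        rw [hδdef]; field_simp; ring
      have h6 : 6/δ = 2*(3/δ) := by ring
      linarith [hK2]
    have hreal : (T.card : ℝ) * N ≤ 88^(n-1) * ((n:ℝ)^3)^(n-1) * N * (1/ε)^(n-1) := by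
      have h1 : (T.card : ℝ) = (2*(K:ℝ)+1)^(n-1) := by
        rw [hTcard]; push_cast; ring
      have h2 : (2*(K:ℝ)+1)^(n-1) ≤ (88 * (n:ℝ)^3 * (1/ε))^(n-1) :=
        pow_le_pow_left₀ (by positivity) h2K _
      have h3 : (88 * (n:ℝ)^3 * (1/ε))^(n-1) = 88^(n-1) * ((n:ℝ)^3)^(n-1) * (1/ε)^(n-1) := by
        rw [mul_pow, mul_pow]
      rw [h1]
      calc (2*(K:ℝ)+1)^(n-1) * N ≤ (88 * (n:ℝ)^3 * (1/ε))^(n-1) * N := by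
            apply mul_le_mul_of_nonneg_right h2 (by positivity)
        _ = 88^(n-1) * ((n:ℝ)^3)^(n-1) * N * (1/ε)^(n-1) := by rw [h3]; ring
    have hθ : ((88 * (n:ℝ)^3)^(n-1)) * N * (1/ε)^(n-1)
        = 88^(n-1) * ((n:ℝ)^3)^(n-1) * N * (1/ε)^(n-1) := by
      rw [mul_pow]
    have hfin : (T.card : ℝ) * N ≤ (U.card : ℝ) := by
      rw [← hθ] at hreal
      linarith [hcard]
    exact_mod_cast hfin
  obtain ⟨t, htT, htcard⟩ :=
    Finset.exists_le_card_fiber_of_mul_le_card_of_maps_to hmaps hTne hcount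
  obtain ⟨α₀, hα₀⟩ := Finset.card_pos.mp (lt_of_lt_of_le hNpos htcard)
  have hα₀U : α₀ ∈ U := (Finset.mem_filter.mp hα₀).1
  have hpball : ‖c α₀‖ ≤ 1/3 := hcball α₀ hα₀U
  -- direction of the line
  set w : En n := Y (c α₀) - z₀ with hwdef
  clear_value w
  have hwexp : w = (s (c α₀))⁻¹ • (c α₀ - z₀) := by
    rw [hwdef]
    simp only [hYdef]
    exact add_sub_cancel_left _ _
  have hwne : w ≠ 0 := by
    rw [hwexp]
    obtain ⟨hs1, hs2⟩ := hs_bounds (c α₀) hpball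
    have h1 : c α₀ - z₀ ≠ 0 := by
      intro h
      have h2 : ‖c α₀ - z₀‖ = 0 := by rw [h, norm_zero]
      have h3 := norm_sub_norm_le z₀ (c α₀)
      rw [hz, norm_sub_rev] at h3
      linarith
    exact smul_ne_zero (inv_ne_zero (ne_of_gt (by linarith))) h1
  set v : En n := ‖w‖⁻¹ • w with hvdef
  clear_value v
  have hv : ‖v‖ = 1 := by rw [hvdef]; exact norm_smul_inv_norm hwne
  have hwnorm : ‖w‖ ≠ 0 := norm_ne_zero_iff.mpr hwne
  -- coordinate estimates on the same cell
  have hsame : ∀ α ∈ U.filter (fun β => f β = t), ∀ i,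
      |Y (c α) i - Y (c α₀) i| ≤ (n:ℝ)^2 * δ := by
    intro α hα i
    have h1 : f α = t := (Finset.mem_filter.mp hα).2
    have h2 : f α₀ = t := (Finset.mem_filter.mp hα₀).2
    have hαU : α ∈ U := (Finset.mem_filter.mp hα).1
    have hfloor : ∀ j, j ≠ i₀ → |Y (c α) j - Y (c α₀) j| ≤ δ := by
      intro j hj
      apply stmt16_floor hδ
      have e1 := congrFun h1 j
      have e2 := congrFun h2 j
      simp only [hfdef, if_neg hj] at e1 e2
      rw [e1, ← e2]
    by_cases hi : i = i₀
    · subst hi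
      have hia : ⟪Y (c α), z₀⟫ = 0 := hYinner _ (hcball α hαU)
      have hib : ⟪Y (c α₀), z₀⟫ = 0 := hYinner _ hpball
      have hsum : ∑ j, (Y (c α) j - Y (c α₀) j) * z₀ j = 0 := by
        have ea : ∑ j, Y (c α) j * z₀ j = 0 := by
          rw [← hia]; simp [PiLp.inner_apply, RCLike.inner_apply]; exact Finset.sum_congr rfl (fun _ _ => mul_comm _ _)
        have eb : ∑ j, Y (c α₀) j * z₀ j = 0 := by
          rw [← hib]; simp [PiLp.inner_apply, RCLike.inner_apply]; exact Finset.sum_congr rfl (fun _ _ => mul_comm _ _)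
        simp only [sub_mul, Finset.sum_sub_distrib, ea, eb, sub_zero]
      have hsplit : (Y (c α) i - Y (c α₀) i) * z₀ i
          = -∑ j ∈ Finset.univ.erase i, (Y (c α) j - Y (c α₀) j) * z₀ j := by
        rw [← Finset.add_sum_erase _ _ (Finset.mem_univ i)] at hsum
        linarith
      have habs : |Y (c α) i - Y (c α₀) i| * |z₀ i| ≤ (n:ℝ) * δ := by
        rw [← abs_mul, hsplit, abs_neg]
        calc |∑ j ∈ Finset.univ.erase i, (Y (c α) j - Y (c α₀) j) * z₀ j|
            ≤ ∑ j ∈ Finset.univ.erase i, |(Y (c α) j - Y (c α₀) j) * z₀ j| :=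
              Finset.abs_sum_le_sum_abs _ _
          _ ≤ ∑ _j ∈ Finset.univ.erase i, δ := by
              apply Finset.sum_le_sum
              intro j hj
              rw [abs_mul]
              have hd := hfloor j (Finset.ne_of_mem_erase hj)
              have hzj := hz₀le j
              nlinarith [abs_nonneg (Y (c α) j - Y (c α₀) j), abs_nonneg (z₀ j)]
          _ = ((Finset.univ.erase i).card : ℝ) * δ := by
              rw [Finset.sum_const, nsmul_eq_mul]
          _ ≤ (n:ℝ) * δ := by
              rw [Finset.card_erase_of_mem (Finset.mem_univ i), Finset.card_univ,
                Fintype.card_fin]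
              have hcast : ((n - 1 : ℕ) : ℝ) ≤ (n:ℝ) := by
                have h9 : (n - 1 : ℕ) ≤ n := Nat.sub_le _ _
                exact_mod_cast h9
              exact mul_le_mul_of_nonneg_right hcast hδ.le
      have hD0 : (0:ℝ) ≤ |Y (c α) i - Y (c α₀) i| := abs_nonneg _
      have hsq : (0:ℝ) ≤ Real.sqrt n := Real.sqrt_nonneg _
      calc |Y (c α) i - Y (c α₀) i| = |Y (c α) i - Y (c α₀) i| * 1 := (mul_one _).symm
        _ ≤ |Y (c α) i - Y (c α₀) i| * (Real.sqrt n * |z₀ i|) :=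
            mul_le_mul_of_nonneg_left hi₀big hD0
        _ = Real.sqrt n * (|Y (c α) i - Y (c α₀) i| * |z₀ i|) := by ring
        _ ≤ Real.sqrt n * ((n:ℝ) * δ) := mul_le_mul_of_nonneg_left habs hsq
        _ ≤ (n:ℝ) * ((n:ℝ) * δ) := mul_le_mul_of_nonneg_right hsqrtn' (by positivity)
        _ = (n:ℝ)^2 * δ := by ring
    · have hd := hfloor i hi
      have hn2 : (1:ℝ) ≤ (n:ℝ)^2 := by nlinarith
      nlinarith [mul_nonneg (by linarith : (0:ℝ) ≤ (n:ℝ)^2 - 1) hδ.le]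
  have hYdiff : ∀ α ∈ U.filter (fun β => f β = t), ‖Y (c α) - Y (c α₀)‖ ≤ (n:ℝ)^3 * δ := by
    intro α hα
    have h1 : ∀ i, |(Y (c α) - Y (c α₀)) i| ≤ (n:ℝ)^2 * δ := by
      intro i
      have h2 : (Y (c α) - Y (c α₀)) i = Y (c α) i - Y (c α₀) i := rfl
      rw [h2]
      exact hsame α hα i
    calc ‖Y (c α) - Y (c α₀)‖ ≤ Real.sqrt n * ((n:ℝ)^2 * δ) :=
          stmt16_norm_le _ _ (by positivity) h1
      _ ≤ (n:ℝ) * ((n:ℝ)^2 * δ) := mul_le_mul_of_nonneg_right hsqrtn' (by positivity)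
      _ = (n:ℝ)^3 * δ := by ring
  -- every cube in the heavy cell is hit by the line through z₀ in direction v
  have hhit : ∀ α ∈ U.filter (fun β => f β = t),
      (gridCube n ε α ∩ lineThrough n z₀ v).Nonempty := by
    intro α hα
    have hαU : α ∈ U := (Finset.mem_filter.mp hα).1
    have hqball : ‖c α‖ ≤ 1/3 := hcball α hαU
    obtain ⟨hs1, hs2⟩ := hs_bounds (c α) hqball
    refine ⟨z₀ + s (c α) • w, ?_, ⟨s (c α) * ‖w‖, ?_⟩⟩
    · -- membership in the cube
      have hxq : (z₀ + s (c α) • w) - c α = s (c α) • (Y (c α₀) - Y (c α)) := by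
        have e : c α = z₀ + s (c α) • (Y (c α) - z₀) := (hYq (c α) hqball).symm
        calc (z₀ + s (c α) • w) - c α
            = (z₀ + s (c α) • (Y (c α₀) - z₀)) - (z₀ + s (c α) • (Y (c α) - z₀)) := by
              rw [← e, ← hwdef]
          _ = s (c α) • (Y (c α₀) - Y (c α)) := by
              rw [smul_sub, smul_sub, smul_sub]
              abel
      have hxqnorm : ‖(z₀ + s (c α) • w) - c α‖ ≤ ε/4 := by
        rw [hxq, norm_smul, Real.norm_eq_abs, abs_of_nonneg (by linarith)]
        have h1 : ‖Y (c α₀) - Y (c α)‖ ≤ (n:ℝ)^3 * δ := by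
          rw [norm_sub_rev]; exact hYdiff α hα
        have h2 : (n:ℝ)^3 * δ = ε/8 := by
          rw [hδdef]; field_simp
        rw [h2] at h1
        have h3 : s (c α) * ‖Y (c α₀) - Y (c α)‖ ≤ (4/3) * (ε/8) :=
          mul_le_mul hs2 h1 (norm_nonneg _) (by norm_num)
        linarith
      intro i
      have h1 : |(z₀ + s (c α) • w) i - c α i| ≤ ε/4 := by
        have h2 : ((z₀ + s (c α) • w) - c α) i = (z₀ + s (c α) • w) i - c α i := rfl
        have h3 := (stmt16_abs_apply_le_norm ((z₀ + s (c α) • w) - c α) i).trans hxqnorm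
        rwa [h2] at h3
      rw [abs_le] at h1
      have h3 := hcapp α i
      have h4 : ((α i : ℝ) + 1/2) * ε - (α i : ℝ) * ε = ε/2 := by ring
      have h5 : ((α i : ℝ) + 1) * ε - ((α i : ℝ) + 1/2) * ε = ε/2 := by ring
      constructor <;> [linarith [h1.1]; linarith [h1.2]]
    · -- membership in the line
      rw [hvdef, smul_smul, mul_assoc, mul_inv_cancel₀ hwnorm, mul_one]
  -- conclude
  have hsub : ↑(U.filter (fun β => f β = t)) ⊆ {α : Fin n → ℤ |
      α ∈ U ∧ (gridCube n ε α ∩ lineThrough n z₀ v).Nonempty} := by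
    intro α hα
    exact ⟨(Finset.mem_filter.mp hα).1, hhit α hα⟩
  have hSU : {α : Fin n → ℤ |
      α ∈ U ∧ (gridCube n ε α ∩ lineThrough n z₀ v).Nonempty} ⊆ ↑U := fun α hα => hα.1
  refine ⟨v, hv, ?_⟩
  calc N ≤ (U.filter (fun β => f β = t)).card := htcard
    _ = (↑(U.filter (fun β => f β = t)) : Set (Fin n → ℤ)).ncard :=
        (Set.ncard_coe_finset _).symm
    _ ≤ _ := Set.ncard_le_ncard hsub (U.finite_toSet.subset hSU)
end

section
/- Let n ≥ 2 and d ≥ 1. There exists a constant ξ_1 = ξ_1(n,d) > 0, depending only on n and d, with the following property: let Z ⊂ B̂^n, let z_0 ∈ S^{n-1}, and let ε, κ > 0 satisfy ε ≤ 1/(10√n) and κ > 10√n·ε. If M(ε,Z) ≥ ξ_1 · κ · (1/ε)^n, then there exist d+1 distinct points z_1, …, z_{d+1} ∈ Z and a straight line ℓ in ℝ^n through z_0 such that (1) the distance of each z_j to ℓ is at most √n·ε, and (2) the pairwise distances between the orthogonal projections of the z_j onto ℓ are at least κ. -/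
open scoped RealInnerProductSpace
noncomputable section Aux
set_option maxHeartbeats 2000000

lemma inner_coords {n : ℕ} (x y : En n) : ⟪x, y⟫ = ∑ j, x j * y j := by
  simp [PiLp.inner_apply, RCLike.inner_apply, conj_trivial]
  exact Finset.sum_congr rfl (fun _ _ => mul_comm _ _)

lemma coord_le_norm {n : ℕ} (x : En n) (j : Fin n) : |x j| ≤ ‖x‖ := by
  rw [EuclideanSpace.norm_eq]
  rw [← Real.sqrt_sq_eq_abs]
  apply Real.sqrt_le_sqrt
  have : x j ^ 2 = ‖x j‖ ^ 2 := by simp [sq_abs]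
  rw [this]
  exact Finset.single_le_sum (f := fun i => ‖x i‖ ^ 2) (fun i _ => by positivity) (Finset.mem_univ j)

lemma norm_le_of_coords {n : ℕ} (x : En n) (c : ℝ) (hc : 0 ≤ c) (h : ∀ j, |x j| ≤ c) :
    ‖x‖ ≤ Real.sqrt n * c := by
  rw [EuclideanSpace.norm_eq]
  have h1 : ∑ i, ‖x i‖ ^ 2 ≤ ∑ _i : Fin n, c ^ 2 := by
    apply Finset.sum_le_sum
    intro i _
    have := h i
    have : ‖x i‖ ≤ c := by simpa using this
    exact pow_le_pow_left₀ (norm_nonneg _) this 2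
  have h2 : (∑ _i : Fin n, c ^ 2) = n * c ^ 2 := by simp [mul_comm]
  calc Real.sqrt (∑ i, ‖x i‖ ^ 2) ≤ Real.sqrt (n * c ^ 2) := Real.sqrt_le_sqrt (by rw [← h2]; exact h1)
    _ = Real.sqrt n * c := by
        rw [Real.sqrt_mul (by positivity)]
        rw [Real.sqrt_sq hc]

lemma distLine_eq {n : ℕ} (z₀ v p : En n) :
    distLine n z₀ v p = ‖p - z₀ - (⟪p - z₀, v⟫) • v‖ := by
  rw [distLine, projLine, dist_eq_norm]
  congr 1
  abel

lemma distLine_le {n : ℕ} (z₀ v p : En n) (hv : ‖v‖ = 1) (t : ℝ) :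
    distLine n z₀ v p ≤ ‖p - z₀ - t • v‖ := by
  rw [distLine_eq]
  set w := p - z₀
  set c := (⟪w, v⟫ : ℝ)
  have horth : ⟪w - c • v, v⟫ = 0 := by
    rw [inner_sub_left, real_inner_smul_left, real_inner_self_eq_norm_sq, hv]
    simp [c]
  have hdecomp : w - t • v = (w - c • v) + (c - t) • v := by
    rw [sub_smul]; abel
  have : ‖w - t • v‖ ^ 2 = ‖w - c • v‖ ^ 2 + ‖(c - t) • v‖ ^ 2 := by
    rw [hdecomp]
    rw [norm_add_sq_real]
    have : ⟪w - c • v, (c - t) • v⟫ = 0 := by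
      rw [real_inner_smul_right, horth, mul_zero]
    rw [this]; ring
  nlinarith [norm_nonneg (w - t • v), norm_nonneg (w - c • v), norm_nonneg ((c - t) • v), sq_nonneg ((c-t))]

lemma dist_projLine {n : ℕ} (z₀ v p q : En n) (hv : ‖v‖ = 1) :
    dist (projLine n z₀ v p) (projLine n z₀ v q) = |(⟪p - z₀, v⟫ : ℝ) - ⟪q - z₀, v⟫| := by
  rw [projLine, projLine, dist_eq_norm]
  have : z₀ + (⟪p - z₀, v⟫ : ℝ) • v - (z₀ + (⟪q - z₀, v⟫ : ℝ) • v)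
      = ((⟪p - z₀, v⟫ : ℝ) - ⟪q - z₀, v⟫) • v := by
    rw [sub_smul]; abel
  rw [this, norm_smul, hv, mul_one, Real.norm_eq_abs]


def uDir (n : ℕ) (z₀ p : En n) : En n := ‖p - z₀‖⁻¹ • (p - z₀)
def sVal (n : ℕ) (z₀ p : En n) : ℝ := ⟪uDir n z₀ p, z₀⟫
def PVec (n : ℕ) (z₀ p : En n) : En n := uDir n z₀ p - sVal n z₀ p • z₀

lemma dirFacts {n : ℕ} (z₀ p : En n) (hz₀ : ‖z₀‖ = 1) (hp : ‖p‖ ≤ 1/3) :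
    2/3 ≤ ‖p - z₀‖ ∧ ‖p - z₀‖ ≤ 4/3 ∧ ‖uDir n z₀ p‖ = 1 ∧ sVal n z₀ p ≤ -(1/2) ∧
    ⟪PVec n z₀ p, z₀⟫ = 0 ∧ ‖PVec n z₀ p‖ ≤ 1 ∧
    ‖PVec n z₀ p‖ ^ 2 = 1 - sVal n z₀ p ^ 2 := by
  have hr1 : 2/3 ≤ ‖p - z₀‖ := by
    have h1 : ‖z₀‖ - ‖p‖ ≤ ‖z₀ - p‖ := norm_sub_norm_le _ _
    rw [norm_sub_rev] at h1
    linarith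
  have hr2 : ‖p - z₀‖ ≤ 4/3 := by
    have := norm_sub_le p z₀
    rw [hz₀] at this; linarith
  have hrpos : (0:ℝ) < ‖p - z₀‖ := by linarith
  have hu : ‖uDir n z₀ p‖ = 1 := by
    rw [uDir, norm_smul, norm_inv, norm_norm]
    field_simp
  have hs : sVal n z₀ p ≤ -(1/2) := by
    have hip : ⟪p, z₀⟫ ≤ 1/3 := by
      calc (⟪p, z₀⟫ : ℝ) ≤ ‖p‖ * ‖z₀‖ := real_inner_le_norm _ _
        _ ≤ 1/3 := by rw [hz₀]; linarith
    have ha : (⟪p - z₀, z₀⟫ : ℝ) ≤ -(2/3) := by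
      rw [inner_sub_left, real_inner_self_eq_norm_sq, hz₀]
      have h1 : (1:ℝ)^2 = 1 := one_pow 2
      rw [h1]; linarith
    have heq : sVal n z₀ p * ‖p - z₀‖ = ⟪p - z₀, z₀⟫ := by
      rw [sVal, uDir, real_inner_smul_left]
      field_simp
    nlinarith [heq]
  have horth : ⟪PVec n z₀ p, z₀⟫ = 0 := by
    rw [PVec, inner_sub_left, real_inner_smul_left, real_inner_self_eq_norm_sq, hz₀, sVal]
    ring
  have hid : ‖PVec n z₀ p‖ ^ 2 = 1 - sVal n z₀ p ^ 2 := by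
    rw [PVec, norm_sub_sq_real, real_inner_smul_right, norm_smul, hu]
    rw [← sVal, Real.norm_eq_abs, hz₀]
    rw [mul_pow, sq_abs]
    ring
  have hPle : ‖PVec n z₀ p‖ ≤ 1 := by
    nlinarith [norm_nonneg (PVec n z₀ p), sq_nonneg (sVal n z₀ p)]
  exact ⟨hr1, hr2, hu, hs, horth, hPle, hid⟩

lemma uDir_eq {n : ℕ} (z₀ p : En n) : uDir n z₀ p = PVec n z₀ p + sVal n z₀ p • z₀ := by
  rw [PVec]; abel

lemma dirClose {n : ℕ} (z₀ p q : En n) (hn : 2 ≤ n) (hz₀ : ‖z₀‖ = 1)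
    (hp : ‖p‖ ≤ 1/3) (hq : ‖q‖ ≤ 1/3) (i : Fin n) (hzi : 1/(n:ℝ) ≤ |z₀ i|)
    {δ : ℝ} (hδ : 0 < δ) (hcl : ∀ j, j ≠ i → |PVec n z₀ p j - PVec n z₀ q j| ≤ δ) :
    ‖uDir n z₀ p - uDir n z₀ q‖ ≤ 3 * (n:ℝ)^3 * δ := by
  obtain ⟨_, _, hup, hsp, hop, hPp, hidp⟩ := dirFacts z₀ p hz₀ hp
  obtain ⟨_, _, huq, hsq, hoq, hPq, hidq⟩ := dirFacts z₀ q hz₀ hq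
  have hn1 : (1:ℝ) ≤ (n:ℝ) := by exact_mod_cast Nat.one_le_of_lt hn
  set D : En n := PVec n z₀ p - PVec n z₀ q with hD
  have hDj : ∀ j, D j = PVec n z₀ p j - PVec n z₀ q j := fun j => rfl
  have hDz : (∑ j, D j * z₀ j) = 0 := by
    rw [← inner_coords, hD, inner_sub_left, hop, hoq]; ring
  -- bound on coordinate i
  have hDi : |D i| ≤ (n:ℝ)^2 * δ := by
    have hsplit : D i * z₀ i + ∑ j ∈ Finset.univ.erase i, D j * z₀ j = 0 := by
      have h0 := Finset.add_sum_erase Finset.univ (fun j => D j * z₀ j) (Finset.mem_univ i)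
      simp only at h0
      rw [h0]; exact hDz
    have habs : |D i * z₀ i| ≤ (n:ℝ) * δ := by
      have h1 : |D i * z₀ i| = |∑ j ∈ Finset.univ.erase i, D j * z₀ j| := by
        rw [show D i * z₀ i = -(∑ j ∈ Finset.univ.erase i, D j * z₀ j) by linarith]
        rw [abs_neg]
      rw [h1]
      calc |∑ j ∈ Finset.univ.erase i, D j * z₀ j|
          ≤ ∑ j ∈ Finset.univ.erase i, |D j * z₀ j| := Finset.abs_sum_le_sum_abs _ _
        _ ≤ ∑ _j ∈ Finset.univ.erase i, δ := by
            apply Finset.sum_le_sum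
            intro j hj
            have hji : j ≠ i := Finset.ne_of_mem_erase hj
            rw [abs_mul]
            calc |D j| * |z₀ j| ≤ δ * 1 := by
                  apply mul_le_mul
                  · rw [hDj]; exact hcl j hji
                  · calc |z₀ j| ≤ ‖z₀‖ := coord_le_norm _ _
                      _ = 1 := hz₀
                  · positivity
                  · exact hδ.le
              _ = δ := mul_one δ
        _ = (Finset.univ.erase i).card * δ := by rw [Finset.sum_const, nsmul_eq_mul]
        _ ≤ (n:ℝ) * δ := by
            apply mul_le_mul_of_nonneg_right _ hδ.le
            have : (Finset.univ.erase i).card ≤ n := by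
              calc (Finset.univ.erase i).card ≤ Finset.univ.card := Finset.card_le_card (Finset.erase_subset _ _)
                _ = n := Finset.card_univ.trans (Fintype.card_fin n)
            exact_mod_cast this
    have h2 : |D i| * (1/(n:ℝ)) ≤ (n:ℝ) * δ := by
      calc |D i| * (1/(n:ℝ)) ≤ |D i| * |z₀ i| := by
            apply mul_le_mul_of_nonneg_left hzi (abs_nonneg _)
        _ = |D i * z₀ i| := (abs_mul _ _).symm
        _ ≤ (n:ℝ) * δ := habs
    have hnpos : (0:ℝ) < (n:ℝ) := by linarith
    calc |D i| = |D i| * (1/(n:ℝ)) * (n:ℝ) := by field_simp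
      _ ≤ (n:ℝ) * δ * (n:ℝ) := by
          apply mul_le_mul_of_nonneg_right h2 hnpos.le
      _ = (n:ℝ)^2 * δ := by ring
  have hDall : ∀ j, |D j| ≤ (n:ℝ)^2 * δ := by
    intro j
    by_cases hji : j = i
    · rw [hji]; exact hDi
    · have h12 : (1:ℝ) ≤ (n:ℝ)^2 := by nlinarith
      calc |D j| ≤ δ := by rw [hDj]; exact hcl j hji
        _ ≤ (n:ℝ)^2 * δ := le_mul_of_one_le_left hδ.le h12
  have hDnorm : ‖D‖ ≤ (n:ℝ)^3 * δ := by
    rw [EuclideanSpace.norm_eq]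
    have h1 : (∑ j, ‖D j‖ ^ 2) ≤ ∑ _j : Fin n, ((n:ℝ)^2 * δ)^2 := by
      apply Finset.sum_le_sum
      intro j _
      have := hDall j
      have h2 : ‖D j‖ ≤ (n:ℝ)^2 * δ := by simpa using this
      exact pow_le_pow_left₀ (norm_nonneg _) h2 2
    have h2 : (∑ _j : Fin n, ((n:ℝ)^2 * δ)^2) = (n:ℝ) * ((n:ℝ)^2*δ)^2 := by
      simp [mul_comm]
    calc Real.sqrt (∑ j, ‖D j‖ ^ 2) ≤ Real.sqrt ((n:ℝ) * ((n:ℝ)^2*δ)^2) := by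
          apply Real.sqrt_le_sqrt; rw [← h2]; exact h1
      _ ≤ Real.sqrt (((n:ℝ)^3*δ)^2) := by
          apply Real.sqrt_le_sqrt; nlinarith
      _ = (n:ℝ)^3*δ := Real.sqrt_sq (by positivity)
  -- bound |Δs|
  have hsdiff : |sVal n z₀ p - sVal n z₀ q| ≤ 2 * ‖D‖ := by
    have hnorms : |‖PVec n z₀ p‖ - ‖PVec n z₀ q‖| ≤ ‖D‖ := by
      rw [hD]; exact abs_norm_sub_norm_le _ _
    have key : (sVal n z₀ p - sVal n z₀ q) * (sVal n z₀ p + sVal n z₀ q)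
        = ‖PVec n z₀ q‖^2 - ‖PVec n z₀ p‖^2 := by nlinarith [hidp, hidq]
    have hsum : sVal n z₀ p + sVal n z₀ q ≤ -1 := by linarith
    have hb : |‖PVec n z₀ q‖^2 - ‖PVec n z₀ p‖^2| ≤ 2 * ‖D‖ := by
      have : ‖PVec n z₀ q‖^2 - ‖PVec n z₀ p‖^2
          = (‖PVec n z₀ q‖ - ‖PVec n z₀ p‖) * (‖PVec n z₀ q‖ + ‖PVec n z₀ p‖) := by ring
      rw [this, abs_mul]
      have h3 : |‖PVec n z₀ q‖ - ‖PVec n z₀ p‖| ≤ ‖D‖ := by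
        rw [abs_sub_comm]; exact hnorms
      have h4 : |‖PVec n z₀ q‖ + ‖PVec n z₀ p‖| ≤ 2 := by
        rw [abs_of_nonneg (by positivity)]; linarith
      calc |‖PVec n z₀ q‖ - ‖PVec n z₀ p‖| * |‖PVec n z₀ q‖ + ‖PVec n z₀ p‖|
          ≤ ‖D‖ * 2 := mul_le_mul h3 h4 (abs_nonneg _) (norm_nonneg _)
        _ = 2 * ‖D‖ := by ring
    have habs2 : (1:ℝ) ≤ |sVal n z₀ p + sVal n z₀ q| := by
      rw [abs_of_nonpos (by linarith)]; linarith
    have hchain : |sVal n z₀ p - sVal n z₀ q| * 1 ≤ 2 * ‖D‖ := by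
      calc |sVal n z₀ p - sVal n z₀ q| * 1
          ≤ |sVal n z₀ p - sVal n z₀ q| * |sVal n z₀ p + sVal n z₀ q| :=
            mul_le_mul_of_nonneg_left habs2 (abs_nonneg _)
        _ = |(sVal n z₀ p - sVal n z₀ q) * (sVal n z₀ p + sVal n z₀ q)| := (abs_mul _ _).symm
        _ = |‖PVec n z₀ q‖^2 - ‖PVec n z₀ p‖^2| := by rw [key]
        _ ≤ 2 * ‖D‖ := hb
    linarith
  have hdecomp : uDir n z₀ p - uDir n z₀ q = D + (sVal n z₀ p - sVal n z₀ q) • z₀ := by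
    rw [uDir_eq z₀ p, uDir_eq z₀ q, hD, sub_smul]; abel
  calc ‖uDir n z₀ p - uDir n z₀ q‖ = ‖D + (sVal n z₀ p - sVal n z₀ q) • z₀‖ := by rw [hdecomp]
    _ ≤ ‖D‖ + ‖(sVal n z₀ p - sVal n z₀ q) • z₀‖ := norm_add_le _ _
    _ = ‖D‖ + |sVal n z₀ p - sVal n z₀ q| := by rw [norm_smul, Real.norm_eq_abs, hz₀, mul_one]
    _ ≤ ‖D‖ + 2 * ‖D‖ := by linarith
    _ ≤ 3 * (n:ℝ)^3 * δ := by linarith [hDnorm]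



lemma greedy {γ : Type*} [DecidableEq γ] (t : γ → ℝ) (κ K : ℝ) (hκ : 0 < κ) (hK : 1 ≤ K) :
    ∀ (m : ℕ) (B : Finset γ),
      (∀ s : ℝ, ((B.filter (fun α => |t α - s| < κ)).card : ℝ) ≤ K) →
      (m : ℝ) * K ≤ (B.card : ℝ) →
      ∃ S : Finset γ, S ⊆ B ∧ S.card = m ∧
        ∀ a ∈ S, ∀ b ∈ S, a ≠ b → κ ≤ |t a - t b| := by
  intro m
  induction m with
  | zero => exact fun B _ _ => ⟨∅, by simp, by simp, by simp⟩
  | succ m ih =>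
    intro B hwin hcard
    have hBpos : 0 < (B.card : ℝ) := by
      have : (1:ℝ) ≤ ((m:ℝ)+1) * K := by nlinarith [Nat.cast_nonneg (α := ℝ) m]
      push_cast at hcard
      linarith
    have hBne : B.Nonempty := by
      rw [← Finset.card_pos]
      exact_mod_cast hBpos
    obtain ⟨α, hα⟩ := hBne
    set B' := B.filter (fun β => ¬ |t β - t α| < κ) with hB'
    have hcards : (B.filter (fun β => |t β - t α| < κ)).card + B'.card = B.card :=
      Finset.card_filter_add_card_filter_not _
    have hcard' : (m : ℝ) * K ≤ (B'.card : ℝ) := by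
      have h1 := hwin (t α)
      have h2 : (B'.card : ℝ) = (B.card : ℝ) - ((B.filter (fun β => |t β - t α| < κ)).card : ℝ) := by
        push_cast [← hcards]; ring
      push_cast at hcard
      linarith
    have hwin' : ∀ s : ℝ, ((B'.filter (fun β => |t β - s| < κ)).card : ℝ) ≤ K := by
      intro s
      have : B'.filter (fun β => |t β - s| < κ) ⊆ B.filter (fun β => |t β - s| < κ) :=
        Finset.filter_subset_filter _ (Finset.filter_subset _ _)
      calc ((B'.filter (fun β => |t β - s| < κ)).card : ℝ)
          ≤ ((B.filter (fun β => |t β - s| < κ)).card : ℝ) := by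
            exact_mod_cast Finset.card_le_card this
        _ ≤ K := hwin s
    obtain ⟨S', hS'sub, hS'card, hS'sep⟩ := ih B' hwin' hcard'
    have hαnot : α ∉ S' := by
      intro hmem
      have := hS'sub hmem
      rw [hB', Finset.mem_filter] at this
      exact this.2 (by simp [hκ])
    refine ⟨insert α S', ?_, ?_, ?_⟩
    · intro x hx
      rcases Finset.mem_insert.mp hx with h | h
      · rw [h]; exact hα
      · exact (Finset.filter_subset _ _) (hS'sub h)
    · rw [Finset.card_insert_of_notMem hαnot, hS'card]
    · intro a ha b hb hab
      rcases Finset.mem_insert.mp ha with h1 | h1 <;> rcases Finset.mem_insert.mp hb with h2 | h2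
      · exact absurd (h1.trans h2.symm) hab
      · subst h1
        have := hS'sub h2
        rw [hB', Finset.mem_filter] at this
        rw [abs_sub_comm]
        exact not_lt.mp this.2
      · subst h2
        have := hS'sub h1
        rw [hB', Finset.mem_filter] at this
        exact not_lt.mp this.2
      · exact hS'sep a h1 b h2 hab


/-- Window counting: cubes whose points lie close to the line and project into a `2κ`-window. -/
lemma windowCount {n : ℕ} (hn : 2 ≤ n) {ε κ : ℝ} (hε : 0 < ε)
    (hκε : 10 * Real.sqrt n * ε < κ) (z₀ v : En n) (hv : ‖v‖ = 1)
    (B : Finset (Fin n → ℤ)) (zp : (Fin n → ℤ) → En n)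
    (hcube : ∀ α ∈ B, zp α ∈ gridCube n ε α)
    (hdl : ∀ α ∈ B, distLine n z₀ v (zp α) ≤ Real.sqrt n * ε) (s : ℝ) :
    ((B.filter (fun α => |⟪zp α - z₀, v⟫ - s| < κ)).card : ℝ)
      ≤ ((8*n+1 : ℕ)^n : ℝ) * (3 * κ / ε) := by
  classical
  have hn1 : (1:ℝ) ≤ (n:ℝ) := by exact_mod_cast Nat.one_le_of_lt hn
  have hrn1 : (1:ℝ) ≤ Real.sqrt n := Real.one_le_sqrt.mpr hn1
  have hrnn : Real.sqrt n ≤ (n:ℝ) := by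
    have h := Real.sqrt_le_sqrt (show (n:ℝ) ≤ (n:ℝ)^2 by nlinarith)
    rwa [Real.sqrt_sq (by linarith)] at h
  have hκpos : 0 < κ := by nlinarith
  set tf : (Fin n → ℤ) → ℝ := fun α => ⟪zp α - z₀, v⟫ with htf
  set W := B.filter (fun α => |tf α - s| < κ) with hW
  set g : (Fin n → ℤ) → ℤ := fun α => ⌊(tf α - s)/ε⌋ with hg
  -- fiber bound
  have hfiber : ∀ q ∈ W.image g, (W.filter (fun x => g x = q)).card ≤ (8*n+1)^n := by
    intro q hq
    obtain ⟨α₀, hα₀W, hα₀q⟩ := Finset.mem_image.mp hq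
    have hsub : W.filter (fun x => g x = q) ⊆
        Fintype.piFinset (fun j => Finset.Icc (α₀ j - 4*n) (α₀ j + 4*n)) := by
      intro α hα
      rw [Finset.mem_filter] at hα
      obtain ⟨hαW, hαq⟩ := hα
      have hαB : α ∈ B := Finset.mem_filter.mp hαW |>.1
      have hα₀B : α₀ ∈ B := Finset.mem_filter.mp hα₀W |>.1
      -- |tf α - tf α₀| ≤ ε
      have hfl : ⌊(tf α - s)/ε⌋ = ⌊(tf α₀ - s)/ε⌋ := by
        have h0 : g α = g α₀ := by rw [hαq, hα₀q]
        exact h0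
      have htdiff : |tf α - tf α₀| ≤ ε := by
        have h1 := Int.abs_sub_lt_one_of_floor_eq_floor hfl
        have h2 : (tf α - s)/ε - (tf α₀ - s)/ε = (tf α - tf α₀)/ε := by ring
        rw [h2, abs_div, abs_of_pos hε] at h1
        calc |tf α - tf α₀| = |tf α - tf α₀|/ε * ε := by field_simp
          _ ≤ 1 * ε := by nlinarith [abs_nonneg (tf α - tf α₀)]
          _ = ε := one_mul ε
      -- distance between the two points
      have hzd : ‖zp α - zp α₀‖ ≤ 3 * (n:ℝ) * ε := by
        have hwα : ‖zp α - z₀ - tf α • v‖ ≤ Real.sqrt n * ε := by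
          rw [← distLine_eq]; exact hdl α hαB
        have hwα₀ : ‖zp α₀ - z₀ - tf α₀ • v‖ ≤ Real.sqrt n * ε := by
          rw [← distLine_eq]; exact hdl α₀ hα₀B
        have hdec : zp α - zp α₀ = (zp α - z₀ - tf α • v) - (zp α₀ - z₀ - tf α₀ • v)
            + (tf α - tf α₀) • v := by
          rw [sub_smul]; abel
        calc ‖zp α - zp α₀‖
            ≤ ‖(zp α - z₀ - tf α • v) - (zp α₀ - z₀ - tf α₀ • v)‖ + ‖(tf α - tf α₀) • v‖ := by
              rw [hdec]; exact norm_add_le _ _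
          _ ≤ ‖zp α - z₀ - tf α • v‖ + ‖zp α₀ - z₀ - tf α₀ • v‖ + ‖(tf α - tf α₀) • v‖ := by
              have := norm_sub_le (zp α - z₀ - tf α • v) (zp α₀ - z₀ - tf α₀ • v)
              linarith
          _ ≤ Real.sqrt n * ε + Real.sqrt n * ε + ε := by
              have : ‖(tf α - tf α₀) • v‖ = |tf α - tf α₀| := by
                rw [norm_smul, hv, mul_one, Real.norm_eq_abs]
              rw [this]; linarith
          _ ≤ 3 * (n:ℝ) * ε := by nlinarith
      -- coordinates
      rw [Fintype.mem_piFinset]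
      intro j
      have hcoord : |zp α j - zp α₀ j| ≤ 3 * (n:ℝ) * ε := by
        have h1 : |(zp α - zp α₀) j| ≤ ‖zp α - zp α₀‖ := coord_le_norm _ j
        have h2 : (zp α - zp α₀) j = zp α j - zp α₀ j := rfl
        rw [h2] at h1; linarith
      have hc1 := (hcube α hαB) j
      have hc2 := (hcube α₀ hα₀B) j
      rw [Finset.mem_Icc]
      have hup : (α j : ℝ) ≤ (α₀ j : ℝ) + 4*n := by
        have : (α j : ℝ) * ε ≤ ((α₀ j : ℝ) + 1) * ε + 3*(n:ℝ)*ε := by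
          calc (α j : ℝ) * ε ≤ zp α j := hc1.1
            _ ≤ zp α₀ j + 3*(n:ℝ)*ε := by
                have := abs_le.mp hcoord; linarith
            _ ≤ ((α₀ j : ℝ) + 1) * ε + 3*(n:ℝ)*ε := by linarith [hc2.2]
        have h3 : (α j : ℝ) ≤ (α₀ j : ℝ) + 1 + 3*(n:ℝ) := by
          have := mul_le_mul_of_nonneg_right (le_refl (1:ℝ)) hε.le
          nlinarith
        nlinarith
      have hlo : (α₀ j : ℝ) - 4*n ≤ (α j : ℝ) := by
        have : (α₀ j : ℝ) * ε ≤ ((α j : ℝ) + 1) * ε + 3*(n:ℝ)*ε := by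
          calc (α₀ j : ℝ) * ε ≤ zp α₀ j := hc2.1
            _ ≤ zp α j + 3*(n:ℝ)*ε := by
                have := abs_le.mp hcoord; linarith
            _ ≤ ((α j : ℝ) + 1) * ε + 3*(n:ℝ)*ε := by linarith [hc1.2]
        have h3 : (α₀ j : ℝ) ≤ (α j : ℝ) + 1 + 3*(n:ℝ) := by nlinarith
        nlinarith
      constructor
      · exact_mod_cast hlo
      · exact_mod_cast hup
    calc (W.filter (fun x => g x = q)).card
        ≤ (Fintype.piFinset (fun j => Finset.Icc (α₀ j - 4*n) (α₀ j + 4*n))).card :=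
          Finset.card_le_card hsub
      _ = (8*n+1)^n := by
          rw [Fintype.card_piFinset]
          have : ∀ j : Fin n, (Finset.Icc (α₀ j - 4*(n:ℤ)) (α₀ j + 4*n)).card = 8*n+1 := by
            intro j
            rw [Int.card_Icc]
            omega
          rw [Finset.prod_congr rfl (fun j _ => this j)]
          simp
  have hstep1 : W.card ≤ (8*n+1)^n * (W.image g).card :=
    Finset.card_le_mul_card_image W _ hfiber
  -- image bound
  set Q : ℤ := ⌈κ/ε⌉ with hQ
  have hQ1 : (1:ℤ) ≤ Q := Int.one_le_ceil_iff.mpr (by positivity)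
  have himg : W.image g ⊆ Finset.Icc (-(Q+1)) Q := by
    intro q hq
    obtain ⟨α, hαW, hαq⟩ := Finset.mem_image.mp hq
    have hmem := Finset.mem_filter.mp hαW
    have habs := hmem.2
    have h1 : |tf α - s| < κ := habs
    have h2 : (tf α - s)/ε < κ/ε := by
      apply div_lt_div_of_pos_right ?_ hε
      · exact lt_of_abs_lt h1
    have h3 : -(κ/ε) < (tf α - s)/ε := by
      have h4 := div_lt_div_of_pos_right (show -κ < tf α - s by
        have := abs_lt.mp h1; linarith) hε
      calc -(κ/ε) = -κ/ε := by ring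
        _ < (tf α - s)/ε := h4
    have hcQ : κ/ε ≤ (Q:ℝ) := by rw [hQ]; exact Int.le_ceil _
    have hgα : g α = ⌊(tf α - s)/ε⌋ := rfl
    rw [Finset.mem_Icc, ← hαq, hgα]
    constructor
    · apply Int.le_floor.mpr
      push_cast
      linarith
    · have h5 : ⌊(tf α - s)/ε⌋ < Q := by
        apply Int.floor_lt.mpr
        calc (tf α - s)/ε < κ/ε := h2
          _ ≤ (Q:ℝ) := hcQ
      omega
  have hstep2 : ((W.image g).card : ℝ) ≤ 3 * κ / ε := by
    have h1 : (W.image g).card ≤ (Finset.Icc (-(Q+1)) Q).card := Finset.card_le_card himg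
    have h2 : (Finset.Icc (-(Q+1)) Q).card = (2*Q+2).toNat := by
      rw [Int.card_Icc]; congr 1; ring
    have h3' : ((2*Q+2).toNat : ℤ) = 2*Q+2 := by omega
    have h3 : ((2*Q+2).toNat : ℝ) = 2*(Q:ℝ)+2 := by
      calc ((2*Q+2).toNat : ℝ) = ((2*Q+2 : ℤ) : ℝ) := by exact_mod_cast h3'
        _ = 2*(Q:ℝ)+2 := by push_cast; ring
    have hQub : (Q:ℝ) < κ/ε + 1 := Int.ceil_lt_add_one _
    have hκε10 : 10 ≤ κ/ε := by
      rw [le_div_iff₀ hε]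
      nlinarith
    calc ((W.image g).card : ℝ) ≤ ((2*Q+2).toNat : ℝ) := by
          rw [← h2]; exact_mod_cast h1
      _ = 2*(Q:ℝ)+2 := h3
      _ ≤ 2*(κ/ε+1)+2 := by linarith
      _ ≤ 3 * κ / ε := by
          have : 3*κ/ε = 3*(κ/ε) := by ring
          rw [this]; linarith
  calc (W.card : ℝ) ≤ ((8*n+1)^n : ℕ) * ((W.image g).card : ℝ) := by
        exact_mod_cast hstep1
    _ ≤ ((8*n+1)^n : ℕ) * (3 * κ / ε) := by
        apply mul_le_mul_of_nonneg_left hstep2 (by positivity)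
    _ = ((8*n+1 : ℕ)^n : ℝ) * (3 * κ / ε) := by push_cast; ring


open scoped Classical in
noncomputable def pick (n : ℕ) (ε : ℝ) (Z : Set (En n)) (α : Fin n → ℤ) : En n :=
  if h : (gridCube n ε α ∩ Z).Nonempty then h.choose else 0

lemma pick_mem {n : ℕ} {ε : ℝ} {Z : Set (En n)} {α : Fin n → ℤ}
    (h : (gridCube n ε α ∩ Z).Nonempty) : pick n ε Z α ∈ gridCube n ε α ∩ Z := by
  classical
  rw [pick]
  rw [dif_pos h]
  exact h.choose_spec

set_option maxHeartbeats 2000000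


end Aux

set_option maxHeartbeats 2000000 in
/-- there is `ξ₁(n,d) > 0` such that for `Z ⊆ B̂^n`, `z₀ ∈ S^{n-1}`,
`ε ≤ 1/(10√n)` and `κ > 10√n·ε`, if `M(ε,Z) ≥ ξ₁·κ·(1/ε)^n` then there are `d+1` distinct
points of `Z` and a line `ℓ` through `z₀` with each point within `√n·ε` of `ℓ` and the
projections onto `ℓ` pairwise `κ`-separated. -/
theorem stmt17 (n d : ℕ) (hn : 2 ≤ n) (hd : 1 ≤ d) :
    ∃ ξ₁ : ℝ, 0 < ξ₁ ∧
      ∀ Z : Set (En n), Z ⊆ Metric.closedBall (0 : En n) (1 / 3) →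
        ∀ z₀ ∈ Metric.sphere (0 : En n) 1,
          ∀ ε κ : ℝ, 0 < ε → 0 < κ → ε ≤ 1 / (10 * Real.sqrt n) →
            κ > 10 * Real.sqrt n * ε →
            ξ₁ * κ * (1 / ε) ^ n ≤ (covNum n ε Z : ℝ) →
            ∃ z : Fin (d + 1) → En n, Function.Injective z ∧ (∀ j, z j ∈ Z) ∧
              ∃ v : En n, ‖v‖ = 1 ∧
                (∀ j, distLine n z₀ v (z j) ≤ Real.sqrt n * ε) ∧
                (∀ i j, i ≠ j →
                  κ ≤ dist (projLine n z₀ v (z i)) (projLine n z₀ v (z j))) := by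
  classical
  have hn0 : (0:ℝ) < (n:ℝ) := by exact_mod_cast (show 0 < n by omega)
  have hn1 : (1:ℝ) ≤ (n:ℝ) := by exact_mod_cast Nat.one_le_of_lt hn
  refine ⟨6*((d:ℝ)+1)*(8*(n:ℝ)+1)^n*(9*(n:ℝ)^3)^(n-1), ?_, ?_⟩
  · have h1 : (0:ℝ) < 6*((d:ℝ)+1) := by positivity
    have h2 : (0:ℝ) < (8*(n:ℝ)+1)^n := by positivity
    have h3 : (0:ℝ) < (9*(n:ℝ)^3)^(n-1) := by
      apply pow_pos; nlinarith [pow_pos hn0 3]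
    calc (0:ℝ) < (6*((d:ℝ)+1)) * ((8*(n:ℝ)+1)^n * (9*(n:ℝ)^3)^(n-1)) := by positivity
      _ = 6*((d:ℝ)+1)*(8*(n:ℝ)+1)^n*(9*(n:ℝ)^3)^(n-1) := by ring
  intro Z hZ z₀ hz₀mem ε κ hε hκ hεle hκgt hcov
  have hz₀n : ‖z₀‖ = 1 := by
    rwa [mem_sphere_iff_norm, sub_zero] at hz₀mem
  have hrn1 : (1:ℝ) ≤ Real.sqrt n := Real.one_le_sqrt.mpr hn1
  have hrnn : Real.sqrt n ≤ (n:ℝ) := by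
    have h := Real.sqrt_le_sqrt (show (n:ℝ) ≤ (n:ℝ)^2 by nlinarith)
    rwa [Real.sqrt_sq (by linarith)] at h
  have h1ε : 10 * Real.sqrt n ≤ 1/ε := by
    rw [le_div_iff₀ hε]
    have hpos : (0:ℝ) < 10 * Real.sqrt n := by positivity
    have := mul_le_mul_of_nonneg_right hεle hpos.le
    calc 10 * Real.sqrt n * ε = ε * (10 * Real.sqrt n) := by ring
      _ ≤ 1 / (10 * Real.sqrt n) * (10 * Real.sqrt n) := this
      _ = 1 := by field_simp
  have h10ε : (10:ℝ) ≤ 1/ε := by nlinarith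
  have hκε10 : (10:ℝ) ≤ κ/ε := by
    rw [le_div_iff₀ hε]; nlinarith
  -- coordinate with large z₀ component
  obtain ⟨i₀, hzi⟩ : ∃ i₀ : Fin n, 1/(n:ℝ) ≤ |z₀ i₀| := by
    have hne : (Finset.univ : Finset (Fin n)).Nonempty := by
      refine ⟨⟨0, by omega⟩, Finset.mem_univ _⟩
    obtain ⟨i₀, -, hmax⟩ := Finset.exists_max_image Finset.univ (fun j => |z₀ j|) hne
    refine ⟨i₀, ?_⟩
    have hsum : ∑ j, ‖z₀ j‖^2 = 1 := by
      have h := EuclideanSpace.norm_eq z₀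
      have h2 : ‖z₀‖^2 = ∑ j, ‖z₀ j‖^2 := by
        rw [h]; exact Real.sq_sqrt (by positivity)
      rw [hz₀n] at h2; simpa using h2.symm
    have hle : (1:ℝ) ≤ (n:ℝ) * |z₀ i₀|^2 := by
      rw [← hsum]
      calc ∑ j, ‖z₀ j‖^2 ≤ ∑ _j : Fin n, |z₀ i₀|^2 := by
            apply Finset.sum_le_sum
            intro j _
            rw [Real.norm_eq_abs]
            exact pow_le_pow_left₀ (abs_nonneg _) (hmax j (Finset.mem_univ j)) 2
        _ = (n:ℝ) * |z₀ i₀|^2 := by simp [mul_comm]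
    by_contra hcon
    push_neg at hcon
    have habs : (0:ℝ) ≤ |z₀ i₀| := abs_nonneg _
    have hna : (n:ℝ)*|z₀ i₀| < 1 := by
      have h4 := mul_lt_mul_of_pos_left hcon hn0
      rwa [mul_one_div, div_self (ne_of_gt hn0)] at h4
    have h2 : (n:ℝ)*|z₀ i₀|^2 ≤ |z₀ i₀| := by nlinarith
    have h3 : 1/(n:ℝ) ≤ 1 := by rw [div_le_one hn0]; linarith
    linarith
  -- the finite set of cubes
  set A := {α : Fin n → ℤ | (gridCube n ε α ∩ Z).Nonempty} with hA
  have hAfin : A.Finite := by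
    apply Set.Finite.subset (Set.Finite.pi (fun _ : Fin n =>
      Set.finite_Icc (⌈(-1/3 : ℝ)/ε - 1⌉) (⌊(1/3 : ℝ)/ε⌋)))
    intro α hα
    obtain ⟨x, hx1, hx2⟩ := hα
    rw [Set.mem_pi]
    intro j _
    have hxn : ‖x‖ ≤ 1/3 := by
      have := hZ hx2; rwa [Metric.mem_closedBall, dist_zero_right] at this
    have hcoord := abs_le.mp (le_trans (coord_le_norm x j) hxn)
    have hxj := hx1 j
    rw [Set.mem_Icc]
    constructor
    · apply Int.ceil_le.mpr
      push_cast
      have h1 : (-1/3 : ℝ)/ε ≤ (α j:ℝ)+1 := (div_le_iff₀ hε).mpr (by nlinarith [hxj.2])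
      linarith
    · apply Int.le_floor.mpr
      push_cast
      exact (le_div_iff₀ hε).mpr (by nlinarith [hxj.1])
  set AF := hAfin.toFinset with hAF
  have hANcard : covNum n ε Z = AF.card := Set.ncard_eq_toFinset_card _ hAfin
  have hpickA : ∀ α ∈ AF, pick n ε Z α ∈ gridCube n ε α ∩ Z := by
    intro α hα
    rw [hAF, Set.Finite.mem_toFinset] at hα
    exact pick_mem hα
  have hpickn : ∀ α ∈ AF, ‖pick n ε Z α‖ ≤ 1/3 := by
    intro α hα
    have := hZ (hpickA α hα).2
    rwa [Metric.mem_closedBall, dist_zero_right] at this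
  -- classification
  set δ : ℝ := ε/(4*(n:ℝ)^3) with hδdef
  have hδ : 0 < δ := by rw [hδdef]; positivity
  set cl : (Fin n → ℤ) → (Fin n → ℤ) :=
    fun α j => if j = i₀ then 0 else ⌊PVec n z₀ (pick n ε Z α) j / δ⌋ with hcl
  set L : ℤ := ⌈1/δ⌉ with hLdef
  have hL1 : (1:ℤ) ≤ L := Int.one_le_ceil_iff.mpr (by positivity)
  have hLδ : 1/δ ≤ (L:ℝ) := Int.le_ceil _
  have hLub : (L:ℝ) < 1/δ + 1 := Int.ceil_lt_add_one _
  set T : Finset (Fin n → ℤ) :=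
    Fintype.piFinset (fun j => if j = i₀ then ({0} : Finset ℤ) else Finset.Icc (-L) L) with hT
  have hTne : T.Nonempty := by
    refine ⟨fun _ => 0, ?_⟩
    rw [hT, Fintype.mem_piFinset]
    intro j
    by_cases hji : j = i₀
    · rw [if_pos hji]; simp
    · rw [if_neg hji, Finset.mem_Icc]; omega
  have hmaps : ∀ α ∈ AF, cl α ∈ T := by
    intro α hα
    rw [hT, Fintype.mem_piFinset]
    intro j
    by_cases hji : j = i₀
    · rw [if_pos hji, hcl]
      simp [hji]
    · rw [if_neg hji, Finset.mem_Icc, hcl]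
      simp only [if_neg hji]
      obtain ⟨-, -, -, -, -, hP1, -⟩ := dirFacts z₀ (pick n ε Z α) hz₀n (hpickn α hα)
      have hPj : |PVec n z₀ (pick n ε Z α) j| ≤ 1 :=
        le_trans (coord_le_norm _ j) hP1
      have hPj' := abs_le.mp hPj
      constructor
      · apply Int.le_floor.mpr
        push_cast
        have hdiv : (-1:ℝ)/δ ≤ PVec n z₀ (pick n ε Z α) j / δ :=
          (div_le_div_iff_of_pos_right hδ).mpr hPj'.1
        calc -(L:ℝ) ≤ -(1/δ) := by linarith
          _ = (-1:ℝ)/δ := by ring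
          _ ≤ _ := hdiv
      · have h1 : (⌊PVec n z₀ (pick n ε Z α) j / δ⌋ : ℝ) ≤ (L:ℝ) := by
          calc (⌊PVec n z₀ (pick n ε Z α) j / δ⌋ : ℝ) ≤ PVec n z₀ (pick n ε Z α) j / δ :=
                Int.floor_le _
            _ ≤ 1/δ := by
                have := (div_le_div_iff_of_pos_right hδ).mpr hPj'.2
                calc PVec n z₀ (pick n ε Z α) j / δ ≤ 1/δ := this
                  _ = 1/δ := rfl
            _ ≤ (L:ℝ) := hLδ
        exact_mod_cast h1
  -- size of T
  have hTcard : (T.card : ℝ) ≤ (9*(n:ℝ)^3*(1/ε))^(n-1) := by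
    have hc : T.card = (2*L+1).toNat^(n-1) := by
      rw [hT, Fintype.card_piFinset]
      rw [← Finset.mul_prod_erase Finset.univ _ (Finset.mem_univ i₀)]
      rw [if_pos rfl, Finset.card_singleton, one_mul]
      have h1 : ∀ j ∈ Finset.univ.erase i₀,
          (if j = i₀ then ({0} : Finset ℤ) else Finset.Icc (-L) L).card = (2*L+1).toNat := by
        intro j hj
        rw [if_neg (Finset.ne_of_mem_erase hj), Int.card_Icc]
        congr 1; ring
      rw [Finset.prod_congr rfl h1, Finset.prod_const,
        Finset.card_erase_of_mem (Finset.mem_univ i₀), Finset.card_univ, Fintype.card_fin]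
    have hcast : ((2*L+1).toNat : ℝ) = 2*(L:ℝ)+1 := by
      have h0 : ((2*L+1).toNat : ℤ) = 2*L+1 := by omega
      calc ((2*L+1).toNat : ℝ) = ((2*L+1 : ℤ) : ℝ) := by exact_mod_cast h0
        _ = 2*(L:ℝ)+1 := by push_cast; ring
    have hinvδ : 1/δ = 4*(n:ℝ)^3*(1/ε) := by
      rw [hδdef]; field_simp
    have hn3 : (1:ℝ) ≤ (n:ℝ)^3 := one_le_pow₀ hn1
    have hLub' : (L:ℝ) < 4*(n:ℝ)^3*(1/ε)+1 := by rw [hinvδ] at hLub; exact hLub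
    have hb : 2*(L:ℝ)+1 ≤ 9*(n:ℝ)^3*(1/ε) := by nlinarith
    calc (T.card : ℝ) = ((2*L+1).toNat : ℝ)^(n-1) := by rw [hc]; push_cast; ring
      _ ≤ (9*(n:ℝ)^3*(1/ε))^(n-1) := by
          apply pow_le_pow_left₀ (by positivity)
          rw [hcast]; exact hb
  -- constants
  set wB : ℝ := ((8*n+1 : ℕ)^n : ℝ) * (3*κ/ε) with hwB
  have haC1 : (1:ℝ) ≤ ((8*n+1 : ℕ)^n : ℝ) := by
    exact_mod_cast Nat.one_le_pow n (8*n+1) (by omega)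
  have h3κ : (30:ℝ) ≤ 3*κ/ε := by
    have h0 : 3*κ/ε = 3*(κ/ε) := by ring
    rw [h0]; linarith
  have hw1 : (1:ℝ) ≤ wB := by
    rw [hwB]; nlinarith
  have hdw : (1:ℝ) ≤ ((d:ℝ)+1)*wB := by nlinarith [Nat.cast_nonneg (α := ℝ) d]
  set m : ℕ := ⌈((d:ℝ)+1)*wB⌉₊ with hm
  have hm_ge : ((d:ℝ)+1)*wB ≤ (m:ℝ) := Nat.le_ceil _
  have hm_le : (m:ℝ) ≤ 2*(((d:ℝ)+1)*wB) := by
    have h0 := Nat.ceil_lt_add_one (show (0:ℝ) ≤ ((d:ℝ)+1)*wB by linarith)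
    rw [hm]; linarith
  have hm1 : 1 ≤ m := Nat.one_le_ceil_iff.mpr (by linarith)
  -- pigeonhole
  have hTm : T.card * m ≤ AF.card := by
    have hreal : (T.card : ℝ) * (m:ℝ) ≤ (AF.card : ℝ) := by
      have hmul : (T.card : ℝ) * (m:ℝ) ≤ (9*(n:ℝ)^3*(1/ε))^(n-1) * (2*(((d:ℝ)+1)*wB)) :=
        mul_le_mul hTcard hm_le (Nat.cast_nonneg m) (by positivity)
      have hpow : ((1:ℝ)/ε)^(n-1) * (1/ε) = (1/ε)^n := by
        rw [← pow_succ]; congr 1; omega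
      have heq : (9*(n:ℝ)^3*(1/ε))^(n-1) * (2*(((d:ℝ)+1)*wB))
          = (6*((d:ℝ)+1)*(8*(n:ℝ)+1)^n*(9*(n:ℝ)^3)^(n-1)) * κ * (1/ε)^n := by
        rw [mul_pow, ← hpow, hwB]
        push_cast
        field_simp
        ring
      calc (T.card : ℝ) * (m:ℝ) ≤ _ := hmul
        _ = _ := heq
        _ ≤ (covNum n ε Z : ℝ) := hcov
        _ = (AF.card : ℝ) := by rw [hANcard]
    exact_mod_cast hreal
  obtain ⟨b, hbT, hbB⟩ := Finset.exists_le_card_fiber_of_mul_le_card_of_maps_to hmaps hTne hTm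
  set B := AF.filter (fun α => cl α = b) with hB
  have hBsubAF : B ⊆ AF := Finset.filter_subset _ _
  have hBne : B.Nonempty := by
    rw [← Finset.card_pos]
    have : m ≤ B.card := hbB
    omega
  obtain ⟨αs, hαs⟩ := hBne
  set v : En n := uDir n z₀ (pick n ε Z αs) with hvdef
  have hαsAF : αs ∈ AF := hBsubAF hαs
  obtain ⟨hrs1, hrs2, hvs, -, -, -, -⟩ := dirFacts z₀ (pick n ε Z αs) hz₀n (hpickn αs hαsAF)
  have hvnorm : ‖v‖ = 1 := hvs
  -- distance to line
  have hdl : ∀ α ∈ B, distLine n z₀ v (pick n ε Z α) ≤ Real.sqrt n * ε := by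
    intro α hα
    have hαAF : α ∈ AF := hBsubAF hα
    have hclα : cl α = b := (Finset.mem_filter.mp hα).2
    have hclαs : cl αs = b := (Finset.mem_filter.mp hαs).2
    have hcls : ∀ j, j ≠ i₀ →
        |PVec n z₀ (pick n ε Z α) j - PVec n z₀ (pick n ε Z αs) j| ≤ δ := by
      intro j hj
      have h0 : cl α j = cl αs j := by rw [hclα, hclαs]
      simp only [hcl, if_neg hj] at h0
      have h1 := Int.abs_sub_lt_one_of_floor_eq_floor h0
      have h2 : PVec n z₀ (pick n ε Z α) j / δ - PVec n z₀ (pick n ε Z αs) j / δ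
          = (PVec n z₀ (pick n ε Z α) j - PVec n z₀ (pick n ε Z αs) j)/δ := by ring
      rw [h2, abs_div, abs_of_pos hδ] at h1
      linarith [(div_lt_one hδ).mp h1]
    have hclose := dirClose z₀ (pick n ε Z α) (pick n ε Z αs) hn hz₀n
      (hpickn α hαAF) (hpickn αs hαsAF) i₀ hzi hδ hcls
    obtain ⟨hr1, hr2, -, -, -, -, -⟩ := dirFacts z₀ (pick n ε Z α) hz₀n (hpickn α hαAF)
    have hrne : ‖pick n ε Z α - z₀‖ ≠ 0 := ne_of_gt (by linarith)
    have hsm : ‖pick n ε Z α - z₀‖ • uDir n z₀ (pick n ε Z α) = pick n ε Z α - z₀ := by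
      rw [uDir, smul_smul, mul_inv_cancel₀ hrne, one_smul]
    have hnn : (n:ℝ) ≠ 0 := ne_of_gt hn0
    calc distLine n z₀ v (pick n ε Z α)
        ≤ ‖pick n ε Z α - z₀ - ‖pick n ε Z α - z₀‖ • v‖ := distLine_le z₀ v _ hvnorm _
      _ = ‖‖pick n ε Z α - z₀‖ • (uDir n z₀ (pick n ε Z α) - v)‖ := by
          rw [smul_sub, hsm]
      _ = ‖pick n ε Z α - z₀‖ * ‖uDir n z₀ (pick n ε Z α) - v‖ := by
          rw [norm_smul, norm_norm]
      _ ≤ (4/3) * (3*(n:ℝ)^3*δ) := mul_le_mul hr2 hclose (norm_nonneg _) (by norm_num)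
      _ = ε := by rw [hδdef]; field_simp
      _ ≤ Real.sqrt n * ε := by nlinarith
  -- window bound and greedy extraction
  have hwin : ∀ s : ℝ,
      ((B.filter (fun α => |(⟪pick n ε Z α - z₀, v⟫ : ℝ) - s| < κ)).card : ℝ) ≤ wB := by
    intro s
    rw [hwB]
    apply windowCount hn hε hκgt z₀ v hvnorm B (pick n ε Z) ?_ hdl s
    intro α hα
    exact (hpickA α (hBsubAF hα)).1
  have hBcard : ((d+1 : ℕ):ℝ) * wB ≤ (B.card : ℝ) := by
    push_cast
    calc ((d:ℝ)+1)*wB ≤ (m:ℝ) := hm_ge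
      _ ≤ (B.card : ℝ) := by exact_mod_cast hbB
  obtain ⟨S, hSB, hScard, hSsep⟩ :=
    greedy (fun α => (⟪pick n ε Z α - z₀, v⟫ : ℝ)) κ wB hκ hw1 (d+1) B hwin hBcard
  have hScard' : Fintype.card {x // x ∈ S} = d + 1 := by
    rw [Fintype.card_coe]; exact hScard
  set eo := (Fintype.equivFinOfCardEq hScard').symm with heo
  refine ⟨fun j => pick n ε Z ((eo j : _) : Fin n → ℤ), ?_, ?_, v, hvnorm, ?_, ?_⟩
  · intro j j' hjj
    by_contra hne
    have hvne : ((eo j : _) : Fin n → ℤ) ≠ ((eo j' : _) : Fin n → ℤ) := by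
      intro h
      exact hne (eo.injective (Subtype.ext h))
    have hs := hSsep _ (eo j).2 _ (eo j').2 hvne
    simp only at hjj
    rw [hjj] at hs
    simp at hs
    linarith
  · intro j
    exact (hpickA _ (hBsubAF (hSB (eo j).2))).2
  · intro j
    exact hdl _ (hSB (eo j).2)
  · intro j j' hjj
    have hvne : ((eo j : _) : Fin n → ℤ) ≠ ((eo j' : _) : Fin n → ℤ) :=
      fun h => hjj (eo.injective (Subtype.ext h))
    have hsep := hSsep _ (eo j).2 _ (eo j').2 hvne
    rw [dist_projLine _ _ _ _ hvnorm]
    exact hsep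
end
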